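/- arXiv:1601.03512 — 5 statements merged into one kernel-verified Lean document; each statement's English description precedes it below -/
import Mathlib

section
/- Let M(t) be the associated function of a weight sequence M_p satisfying (M.1) and (M.2), and let g : [a,∞) → [0,∞). If g(t) = O(e^{M(kt)}) as t → ∞ for every k > 0, then there exists a non-decreasing sequence (r_j) of positive reals tending to infinity such that g(t) = O(e^{M_{r_j}(t)}), where M_{r_j} denotes the associated function of the sequence p ↦ M_p · ∏_{j=0}^{p} r_j. -/
open Real Filter

/-- The associated function `M(t) = sup_{p ∈ ℕ} log (t^p / M_p)`. -/
noncomputable def Massoc (M : ℕ → ℝ) (t : ℝ) : ℝ :=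
  ⨆ p : ℕ, Real.log (t ^ p / M p)

/-- Bounded above families from eventually-geometric denominators. -/
lemma bdd_of_ratio (L : ℕ → ℝ) (hL : ∀ q, 0 < L q) (t : ℝ) (ht : 0 < t) (N : ℕ)
    (h : ∀ q, N ≤ q → t * L q ≤ L (q + 1)) :
    BddAbove (Set.range fun q : ℕ => Real.log (t ^ q / L q)) := by
  have hne : (Finset.range (N + 1)).Nonempty := ⟨N, by simp⟩
  refine ⟨(Finset.range (N + 1)).sup' hne (fun q => Real.log (t ^ q / L q)), ?_⟩
  rintro x ⟨q, rfl⟩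
  have key : ∀ q, N ≤ q → t ^ q / L q ≤ t ^ N / L N := by
    intro q hq
    induction q with
    | zero => exact le_of_eq (by rw [Nat.le_zero.mp hq])
    | succ q ih =>
      rcases eq_or_lt_of_le hq with h' | h'
      · exact le_of_eq (by rw [h'])
      · have hq' : N ≤ q := Nat.lt_succ_iff.mp h'
        have h1 : t ^ (q + 1) / L (q + 1) ≤ t ^ (q + 1) / (t * L q) := by
          apply div_le_div_of_nonneg_left (by positivity)
            (by have := hL q; positivity) (h q hq')
        have h2 : t ^ (q + 1) / (t * L q) = t ^ q / L q := by
          rw [pow_succ, mul_comm (t ^ q) t, mul_div_mul_left _ _ (ne_of_gt ht)]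
        calc t ^ (q+1) / L (q+1) ≤ t ^ q / L q := by rw [← h2]; exact h1
          _ ≤ t ^ N / L N := ih hq'
  have memle : ∀ m, m ∈ Finset.range (N+1) → Real.log (t ^ m / L m) ≤
      (Finset.range (N + 1)).sup' hne (fun q => Real.log (t ^ q / L q)) :=
    fun m hm => Finset.le_sup' (fun q => Real.log (t ^ q / L q)) hm
  rcases le_or_gt q N with hq | hq
  · exact memle q (Finset.mem_range.2 (Nat.lt_succ_of_le hq))
  · calc Real.log (t ^ q / L q) ≤ Real.log (t ^ N / L N) :=
          Real.log_le_log (by have := hL q; positivity) (key q hq.le)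
      _ ≤ _ := memle N (Finset.mem_range.2 (Nat.lt_succ_self N))

lemma le_of_steps_upto (f : ℕ → ℝ) :
    ∀ p, (∀ j, j < p → f j ≤ f (j + 1)) → ∀ q, q ≤ p → f q ≤ f p := by
  intro p
  induction p with
  | zero => intro _ q hq; simp [Nat.le_zero.mp hq]
  | succ p ih =>
    intro h q hq
    rcases eq_or_lt_of_le hq with h' | h'
    · exact le_of_eq (by rw [h'])
    · exact le_trans (ih (fun j hj => h j (hj.trans (Nat.lt_succ_self p)))
        q (Nat.lt_succ_iff.mp h')) (h p (Nat.lt_succ_self p))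

lemma le_of_steps_from (f : ℕ → ℝ) (p : ℕ) (h : ∀ j, p ≤ j → f (j + 1) ≤ f j) :
    ∀ q, p ≤ q → f q ≤ f p := by
  intro q hq
  induction q with
  | zero => exact le_of_eq (by rw [Nat.le_zero.mp hq])
  | succ q ih =>
    rcases eq_or_lt_of_le hq with h' | h'
    · exact le_of_eq (by rw [h'])
    · have hq' : p ≤ q := Nat.lt_succ_iff.mp h'
      exact le_trans (h q hq') (ih hq')

noncomputable def Tseq (b : ℕ → ℝ) : ℕ → ℝ
  | 0 => b 0
  | n + 1 => max (b (n + 1)) (Tseq b n + 1)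

lemma Tseq_ge (b : ℕ → ℝ) : ∀ n, b n ≤ Tseq b n
  | 0 => le_refl _
  | _ + 1 => le_max_left _ _

lemma Tseq_succ (b : ℕ → ℝ) (n : ℕ) : Tseq b n + 1 ≤ Tseq b (n + 1) := le_max_right _ _

lemma Tseq_mono (b : ℕ → ℝ) : Monotone (Tseq b) := by
  apply monotone_nat_of_le_succ
  intro n
  exact le_trans (by linarith) (Tseq_succ b n)

def Pseq (q : ℕ → ℕ) : ℕ → ℕ
  | 0 => q 0
  | n + 1 => max (q (n + 1)) (Pseq q n) + 1

lemma Pseq_ge (q : ℕ → ℕ) : ∀ n, q n ≤ Pseq q n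
  | 0 => le_refl _
  | _ + 1 => le_trans (le_max_left _ _) (Nat.le_succ _)

lemma Pseq_strictMono (q : ℕ → ℕ) : StrictMono (Pseq q) := by
  apply strictMono_nat_of_lt_succ
  intro n
  exact Nat.lt_succ_of_le (le_max_right _ _)

/-- Lemma 4.4(i): if `g : [a,∞) → [0,∞)` satisfies `g(t) = O(e^{M(kt)})` as `t → ∞`
for every `k > 0`, where `M` is the associated function of a weight sequence
satisfying (M.1) and (M.2), then there is a non-decreasing sequence `(r_j)` of
positive reals tending to `∞` with `g(t) = O(e^{M_{r_j}(t)})`, where `M_{r_j}` is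
the associated function of `p ↦ M_p ∏_{j=0}^p r_j`. -/
theorem growth_comparison_moderate (M : ℕ → ℝ) (hpos : ∀ p, 0 < M p) (hM0 : M 0 = 1)
    (hM1 : ∀ p : ℕ, 1 ≤ p → M p ^ 2 ≤ M (p - 1) * M (p + 1))
    (A H : ℝ) (hA : 1 ≤ A) (hH : 1 ≤ H)
    (hM2 : ∀ p q : ℕ, M (p + q) ≤ A * H ^ (p + q) * M p * M q)
    (a : ℝ) (g : ℝ → ℝ) (hg : ∀ t, a ≤ t → 0 ≤ g t)
    (hO : ∀ k > (0 : ℝ), ∃ C > (0 : ℝ), ∃ R : ℝ, ∀ t, R ≤ t →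
      g t ≤ C * Real.exp (Massoc M (k * t))) :
    ∃ r : ℕ → ℝ, (∀ j, 0 < r j) ∧ Monotone r ∧ Tendsto r atTop atTop ∧
      ∃ C > (0 : ℝ), ∃ R : ℝ, ∀ t, R ≤ t →
        g t ≤ C * Real.exp
          (Massoc (fun p => M p * ∏ j ∈ Finset.range (p + 1), r j) t) := by
  classical
  -- the quotient sequence
  set m : ℕ → ℝ := fun q => M (q + 1) / M q with hm_def
  have hmpos : ∀ q, 0 < m q := fun q => div_pos (hpos _) (hpos _)
  have hmmono : Monotone m := by
    apply monotone_nat_of_le_succ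
    intro j
    have h1 := hM1 (j + 1) (Nat.le_add_left 1 j)
    simp only [Nat.add_sub_cancel] at h1
    have : M (j + 1) / M j ≤ M (j + 2) / M (j + 1) := by
      rw [div_le_div_iff₀ (hpos j) (hpos (j + 1))]
      nlinarith [hpos j, hpos (j + 1), hpos (j + 2)]
    simpa [hm_def] using this
  have hlogstep : ∀ s : ℝ, 0 < s → ∀ q : ℕ,
      Real.log (s ^ (q + 1) / M (q + 1)) = Real.log (s ^ q / M q) + Real.log (s / m q) := by
    intro s hs q
    rw [Real.log_div (pow_ne_zero _ (ne_of_gt hs)) (ne_of_gt (hpos (q + 1))),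
        Real.log_div (pow_ne_zero _ (ne_of_gt hs)) (ne_of_gt (hpos q)),
        Real.log_div (ne_of_gt hs) (ne_of_gt (hmpos q)),
        Real.log_div (ne_of_gt (hpos (q + 1))) (ne_of_gt (hpos q)),
        Real.log_pow, Real.log_pow]
    push_cast
    ring
  by_cases hB : BddAbove (Set.range m)
  · -- Case B : quotients bounded; take r j = j + 1 and C = C₁.
    obtain ⟨b0, hb0⟩ := hB
    set b' : ℝ := max b0 1 with hb'_def
    have hb'1 : 1 ≤ b' := le_max_right _ _
    have hmb : ∀ q, m q ≤ b' := fun q =>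
      le_trans (hb0 (Set.mem_range_self q)) (le_max_left _ _)
    obtain ⟨C1, hC1, R1, hR1⟩ := hO 1 one_pos
    refine ⟨fun j => (j : ℝ) + 1, fun j => by positivity,
      fun i j hij => by simpa using (Nat.cast_le.mpr hij : (i:ℝ) ≤ j),
      tendsto_atTop_add_const_right _ _ tendsto_natCast_atTop_atTop,
      C1, hC1, max (max R1 (2 * b')) (2 * M 1), ?_⟩
    intro t ht
    have htR1 : R1 ≤ t := le_trans (le_trans (le_max_left _ _) (le_max_left _ _)) ht
    have htb : 2 * b' ≤ t := le_trans (le_trans (le_max_right _ _) (le_max_left _ _)) ht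
    have htM1 : 2 * M 1 ≤ t := le_trans (le_max_right _ _) ht
    have htpos : 0 < t := lt_of_lt_of_le (by linarith) htb
    -- Massoc M (1*t) = 0 because the family is unbounded.
    have hMz : Massoc M (1 * t) = 0 := by
      rw [one_mul]
      apply Real.iSup_of_not_bddAbove
      rintro ⟨x, hx⟩
      have hgrow : ∀ q : ℕ, (q : ℝ) * Real.log 2 ≤ Real.log (t ^ q / M q) := by
        intro q
        induction q with
        | zero => simp [hM0]
        | succ q ih =>
          have h2m : 2 ≤ t / m q := by
            rw [le_div_iff₀ (hmpos q)]
            calc 2 * m q ≤ 2 * b' := by nlinarith [hmb q, hmpos q]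
              _ ≤ t := htb
          have hlog2 : Real.log 2 ≤ Real.log (t / m q) :=
            Real.log_le_log (by norm_num) h2m
          rw [hlogstep t htpos q]
          push_cast
          nlinarith
      obtain ⟨q, hq⟩ := exists_nat_gt (x / Real.log 2)
      have hlog2pos : (0:ℝ) < Real.log 2 := Real.log_pos (by norm_num)
      have h1 : x < (q : ℝ) * Real.log 2 := by
        rw [div_lt_iff₀ hlog2pos] at hq; linarith
      have h2 : Real.log (t ^ q / M q) ≤ x := hx ⟨q, rfl⟩
      linarith [hgrow q]
    have hgt : g t ≤ C1 := by
      have := hR1 t htR1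
      rwa [hMz, Real.exp_zero, mul_one] at this
    -- the new associated function is nonnegative
    set L : ℕ → ℝ := fun p => M p * ∏ j ∈ Finset.range (p + 1), ((j : ℝ) + 1) with hL_def
    have hprodpos : ∀ p : ℕ, (0:ℝ) < ∏ j ∈ Finset.range (p + 1), ((j : ℝ) + 1) := by
      intro p; apply Finset.prod_pos; intro j _; positivity
    have hLpos : ∀ q, 0 < L q := fun q => mul_pos (hpos q) (hprodpos q)
    obtain ⟨N, hN⟩ := exists_nat_gt (t / M 1)
    have hbdd : BddAbove (Set.range fun q : ℕ => Real.log (t ^ q / L q)) := by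
      apply bdd_of_ratio L hLpos t htpos N
      intro q hq
      have hmc : m q * M q = M (q + 1) := div_mul_cancel₀ _ (ne_of_gt (hpos q))
      have hLid : L (q + 1) = (m q * ((q : ℝ) + 2)) * L q := by
        simp only [hL_def, Finset.prod_range_succ]
        rw [← hmc]
        push_cast
        ring
      have hm1 : M 1 ≤ m q := by
        have := hmmono (Nat.zero_le q)
        simpa [hm_def, hM0] using this
      have htle : t ≤ m q * ((q : ℝ) + 2) := by
        have h1 : t < M 1 * N := by
          rw [div_lt_iff₀ (hpos 1)] at hN; linarith
        have h2 : (N : ℝ) ≤ (q : ℝ) + 2 := by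
          have : (N : ℝ) ≤ q := Nat.cast_le.mpr hq
          linarith
        calc t ≤ M 1 * N := h1.le
          _ ≤ m q * ((q:ℝ) + 2) := by nlinarith [hpos 1, hmpos q, Nat.cast_nonneg (α := ℝ) N]
      rw [hLid]
      exact mul_le_mul_of_nonneg_right htle (hLpos q).le
    have h0le : (0:ℝ) ≤ Massoc (fun p => M p * ∏ j ∈ Finset.range (p + 1), ((j:ℝ) + 1)) t := by
      have hle := le_ciSup hbdd 1
      have hval : (0:ℝ) ≤ Real.log (t ^ 1 / L 1) := by
        apply Real.log_nonneg
        rw [le_div_iff₀ (hLpos 1)]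
        have : L 1 = 2 * M 1 := by
          simp [hL_def, Finset.prod_range_succ]
          ring
        rw [this, one_mul, pow_one]
        linarith
      exact le_trans hval hle
    calc g t ≤ C1 := hgt
      _ ≤ C1 * Real.exp (Massoc (fun p => M p * ∏ j ∈ Finset.range (p + 1), ((j:ℝ)+1)) t) := by
          nlinarith [Real.one_le_exp h0le, Real.exp_pos (Massoc (fun p => M p * ∏ j ∈ Finset.range (p + 1), ((j:ℝ)+1)) t)]
  · -- Case A : quotients unbounded
    have hex : ∀ s : ℝ, ∃ q, s < m q := by
      intro s
      obtain ⟨y, ⟨q, rfl⟩, hy⟩ := not_bddAbove_iff.mp hB s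
      exact ⟨q, hy⟩
    set p0 : ℝ → ℕ := fun s => Nat.find (hex s) with hp0_def
    have hp0_spec : ∀ s, s < m (p0 s) := fun s => Nat.find_spec (hex s)
    have hp0_min : ∀ s, ∀ j, j < p0 s → m j ≤ s := fun s j hj =>
      not_lt.mp (Nat.find_min (hex s) hj)
    have hp0_mono : ∀ s s' : ℝ, s ≤ s' → p0 s ≤ p0 s' := fun s s' hss' =>
      Nat.find_mono (fun q hq => lt_of_le_of_lt hss' hq)
    have hO' : ∀ n : ℕ, ∃ C > (0:ℝ), ∃ R : ℝ, ∀ t, R ≤ t →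
        g t ≤ C * Real.exp (Massoc M (t / ((n:ℝ) + 2))) := by
      intro n
      obtain ⟨C, hC, R, hR⟩ := hO (1 / ((n:ℝ) + 2)) (by positivity)
      refine ⟨C, hC, R, fun t ht => ?_⟩
      have := hR t ht
      rwa [one_div_mul_eq_div] at this
    choose Cf hCf Rf hRf using hO'
    set B : ℕ → ℝ := fun n => max (Real.log (Cf n)) 0 with hB_def
    have hBnn : ∀ n, 0 ≤ B n := fun n => le_max_right _ _
    set Q : ℕ → ℕ := fun n => ⌈2 * B n / Real.log 2⌉₊ + 1 with hQ_def
    set bb : ℕ → ℝ := fun n => max (max (Rf n) (((n:ℝ) + 2) * m (Q n))) ((n:ℝ) + 2)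
      with hbb_def
    set T : ℕ → ℝ := Tseq bb with hT_def
    have hTb : ∀ n, bb n ≤ T n := Tseq_ge bb
    have hTn2 : ∀ n : ℕ, ((n:ℝ) + 2) ≤ T n := fun n => le_trans (le_max_right _ _) (hTb n)
    set qf : ℕ → ℕ := fun n => p0 (T (n + 1) / ((n:ℝ) + 2)) with hqf_def
    set P : ℕ → ℕ := Pseq qf with hP_def
    have hPmono : StrictMono P := Pseq_strictMono qf
    set c : ℕ → ℕ := fun j => 1 + ((Finset.range (j + 1)).filter (fun i => P i ≤ j)).card
      with hc_def
    have hc1 : ∀ j, 1 ≤ c j := fun j => Nat.le_add_right 1 _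
    have hcmono : Monotone c := by
      intro i j hij
      simp only [hc_def]
      apply Nat.add_le_add_left
      apply Finset.card_le_card
      intro x hx
      simp only [Finset.mem_filter, Finset.mem_range] at hx ⊢
      omega
    have hcle : ∀ n j, j ≤ P n → c j ≤ n + 2 := by
      intro n j hj
      simp only [hc_def]
      have hsub : (Finset.range (j + 1)).filter (fun i => P i ≤ j) ⊆ Finset.range (n + 1) := by
        intro x hx
        simp only [Finset.mem_filter, Finset.mem_range] at hx ⊢
        have h1 : P x ≤ P n := le_trans hx.2 hj
        have h2 : x ≤ n := hPmono.le_iff_le.mp h1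
        omega
      have := Finset.card_le_card hsub
      rw [Finset.card_range] at this
      omega
    have hctend : Tendsto c atTop atTop := by
      rw [tendsto_atTop_atTop]
      intro b
      refine ⟨P b, fun j hj => ?_⟩
      have hsub : Finset.range b ⊆ (Finset.range (j + 1)).filter (fun i => P i ≤ j) := by
        intro x hx
        simp only [Finset.mem_range] at hx
        simp only [Finset.mem_filter, Finset.mem_range]
        have h1 : P x ≤ P b := hPmono.monotone hx.le
        have h2 : x ≤ P x := hPmono.le_apply
        constructor
        · omega
        · omega
      have := Finset.card_le_card hsub
      rw [Finset.card_range] at this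
      simp only [hc_def]
      omega
    set r : ℕ → ℝ := fun j => Real.sqrt (c j) with hr_def
    have hr1 : ∀ j, 1 ≤ r j := by
      intro j
      rw [hr_def, show (1:ℝ) = Real.sqrt 1 from Real.sqrt_one.symm]
      exact Real.sqrt_le_sqrt (by exact_mod_cast hc1 j)
    have hrpos : ∀ j, 0 < r j := fun j => lt_of_lt_of_le one_pos (hr1 j)
    have hrmono : Monotone r := fun i j hij =>
      Real.sqrt_le_sqrt (by exact_mod_cast hcmono hij)
    have hrtend : Tendsto r atTop atTop := by
      rw [tendsto_atTop_atTop]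
      intro x
      set x' : ℝ := max x 0 with hx'_def
      obtain ⟨i, hi⟩ := (tendsto_atTop_atTop.mp hctend) (⌈x' ^ 2⌉₊)
      refine ⟨i, fun j hj => ?_⟩
      have h1 : x' ^ 2 ≤ (c j : ℝ) := by
        calc x' ^ 2 ≤ (⌈x' ^ 2⌉₊ : ℝ) := Nat.le_ceil _
          _ ≤ (c j : ℝ) := Nat.cast_le.mpr (hi j hj)
      calc x ≤ x' := le_max_left _ _
        _ ≤ r j := by
            rw [hr_def]
            exact Real.le_sqrt_of_sq_le h1
    refine ⟨r, hrpos, hrmono, hrtend, 1, one_pos, T 0, ?_⟩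
    intro t ht
    have hTlim : ∃ k, t < T (k + 1) := by
      obtain ⟨k, hk⟩ := exists_nat_gt t
      refine ⟨k, lt_of_lt_of_le hk ?_⟩
      calc (k:ℝ) ≤ (k:ℝ) + 2 := by linarith
        _ ≤ T k := hTn2 k
        _ ≤ T (k + 1) := Tseq_mono bb (Nat.le_succ k)
    set n : ℕ := Nat.find hTlim with hn_def
    have hn1 : t < T (n + 1) := Nat.find_spec hTlim
    have hn0 : T n ≤ t := by
      rcases Nat.eq_zero_or_pos n with h0 | h0
      · rw [h0]; exact ht
      · have hmin := Nat.find_min hTlim (show n - 1 < n from Nat.sub_lt h0 one_pos)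
        rw [Nat.sub_add_cancel h0] at hmin
        exact not_lt.mp hmin
    have hνpos : (0:ℝ) < (n:ℝ) + 2 := by positivity
    have hν2 : (2:ℝ) ≤ (n:ℝ) + 2 := by
      have : (0:ℝ) ≤ (n:ℝ) := Nat.cast_nonneg n
      linarith
    have htpos : 0 < t := lt_of_lt_of_le (lt_of_lt_of_le hνpos (hTn2 n)) hn0
    set s : ℝ := t / ((n:ℝ) + 2) with hs_def
    have hspos : 0 < s := div_pos htpos hνpos
    have hts : t = s * ((n:ℝ) + 2) := (div_mul_cancel₀ t hνpos.ne').symm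
    set p : ℕ := p0 s with hp_defn
    have hRfT : Rf n ≤ t :=
      le_trans (le_trans (le_trans (le_max_left _ _) (le_max_left _ _)) (hTb n)) hn0
    have hsQ : m (Q n) ≤ s := by
      have h1 : ((n:ℝ) + 2) * m (Q n) ≤ t :=
        le_trans (le_trans (le_trans (le_max_right _ _) (le_max_left _ _)) (hTb n)) hn0
      rw [hs_def, le_div_iff₀ hνpos]
      linarith
    have hQp : Q n < p := by
      rw [hp_defn, hp0_def]
      rw [Nat.lt_find_iff]
      intro j hj
      exact not_lt.mpr (le_trans (hmmono hj) hsQ)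
    have hpP : p ≤ P n := by
      have h1 : s ≤ T (n + 1) / ((n:ℝ) + 2) := by
        rw [hs_def]
        gcongr
      have h2 : p0 (T (n + 1) / ((n:ℝ) + 2)) ≤ P n := by
        have := Pseq_ge qf n
        simpa [hqf_def, hP_def] using this
      exact le_trans (hp0_mono _ _ h1) h2
    -- upper bound for Massoc M s
    have hfp : Massoc M s ≤ Real.log (s ^ p / M p) := by
      apply ciSup_le
      intro q
      rcases le_total q p with hq | hq
      · apply le_of_steps_upto (fun q => Real.log (s ^ q / M q)) p ?_ q hq
        intro j hj
        have hmj : m j ≤ s := hp0_min s j (by rw [hp_defn] at hj; exact hj)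
        have h1 : (0:ℝ) ≤ Real.log (s / m j) :=
          Real.log_nonneg ((one_le_div (hmpos j)).mpr hmj)
        rw [hlogstep s hspos j]
        linarith
      · apply le_of_steps_from (fun q => Real.log (s ^ q / M q)) p ?_ q hq
        intro j hj
        have hsm : s ≤ m j := le_trans (hp0_spec s).le (hmmono (by rw [hp_defn] at hj; exact hj))
        have h1 : Real.log (s / m j) ≤ 0 :=
          Real.log_nonpos (div_nonneg hspos.le (hmpos j).le) ((div_le_one (hmpos j)).mpr hsm)
        rw [hlogstep s hspos j]
        linarith
    -- the new weight sequence
    set L : ℕ → ℝ := fun q => M q * ∏ j ∈ Finset.range (q + 1), r j with hL_def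
    have hprodpos : ∀ q : ℕ, (0:ℝ) < ∏ j ∈ Finset.range (q + 1), r j :=
      fun q => Finset.prod_pos (fun j _ => hrpos j)
    have hLpos : ∀ q, 0 < L q := fun q => mul_pos (hpos q) (hprodpos q)
    have hbdd : BddAbove (Set.range fun q : ℕ => Real.log (t ^ q / L q)) := by
      apply bdd_of_ratio L hLpos t htpos (p0 t)
      intro q hq
      have hmc : m q * M q = M (q + 1) := div_mul_cancel₀ _ (ne_of_gt (hpos q))
      have hLid : L (q + 1) = (m q * r (q + 1)) * L q := by
        simp only [hL_def, Finset.prod_range_succ]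
        rw [← hmc]; ring
      have htm : t ≤ m q := le_trans (hp0_spec t).le (hmmono hq)
      rw [hLid]
      apply mul_le_mul_of_nonneg_right ?_ (hLpos q).le
      calc t ≤ m q := htm
        _ ≤ m q * r (q + 1) := le_mul_of_one_le_right (hmpos q).le (hr1 _)
    have hFp : Real.log (t ^ p / L p) ≤
        Massoc (fun q => M q * ∏ j ∈ Finset.range (q + 1), r j) t := by
      have := le_ciSup hbdd p
      exact this
    have hsqpos : (0:ℝ) < Real.sqrt ((n:ℝ) + 2) := Real.sqrt_pos.mpr hνpos
    have hPile : ∏ j ∈ Finset.range (p + 1), r j ≤ Real.sqrt ((n:ℝ) + 2) ^ (p + 1) := by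
      calc ∏ j ∈ Finset.range (p + 1), r j
          ≤ ∏ _j ∈ Finset.range (p + 1), Real.sqrt ((n:ℝ) + 2) := by
            apply Finset.prod_le_prod (fun j _ => (hrpos j).le)
            intro j hj
            rw [hr_def]
            apply Real.sqrt_le_sqrt
            have hj' : j ≤ P n := le_trans (Nat.lt_succ_iff.mp (Finset.mem_range.mp hj)) hpP
            have h1 : c j ≤ n + 2 := hcle n j hj'
            calc ((c j : ℕ) : ℝ) ≤ ((n + 2 : ℕ) : ℝ) := Nat.cast_le.mpr h1
              _ = (n:ℝ) + 2 := by push_cast; ring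
        _ = Real.sqrt ((n:ℝ) + 2) ^ (p + 1) := by rw [Finset.prod_const, Finset.card_range]
    have hstep1 : Real.log (t ^ p / (M p * Real.sqrt ((n:ℝ) + 2) ^ (p + 1))) ≤
        Real.log (t ^ p / L p) := by
      apply Real.log_le_log (div_pos (pow_pos htpos p) (mul_pos (hpos p) (pow_pos hsqpos _)))
      apply div_le_div_of_nonneg_left (by positivity) (hLpos p)
      simp only [hL_def]
      exact mul_le_mul_of_nonneg_left hPile (hpos p).le
    have hstep2 : Real.log (t ^ p / (M p * Real.sqrt ((n:ℝ) + 2) ^ (p + 1))) =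
        Real.log (s ^ p / M p) + ((p:ℝ) - 1) * Real.log ((n:ℝ) + 2) / 2 := by
      have hsν : Real.log t = Real.log s + Real.log ((n:ℝ) + 2) := by
        rw [hts, Real.log_mul hspos.ne' hνpos.ne']
      rw [Real.log_div (pow_ne_zero _ htpos.ne')
            (ne_of_gt (mul_pos (hpos p) (pow_pos hsqpos _))),
          Real.log_mul (ne_of_gt (hpos p)) (pow_ne_zero _ (ne_of_gt hsqpos)),
          Real.log_pow, Real.log_pow, Real.log_sqrt hνpos.le,
          Real.log_div (pow_ne_zero _ hspos.ne') (ne_of_gt (hpos p)), Real.log_pow, hsν]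
      push_cast
      ring
    have hlog2pos : (0:ℝ) < Real.log 2 := Real.log_pos (by norm_num)
    have hstep3 : B n ≤ ((p:ℝ) - 1) * Real.log ((n:ℝ) + 2) / 2 := by
      have hlogν : Real.log 2 ≤ Real.log ((n:ℝ) + 2) := Real.log_le_log (by norm_num) hν2
      have hp1 : 2 * B n / Real.log 2 ≤ (p:ℝ) - 1 := by
        have h1 : (2 * B n / Real.log 2) ≤ (⌈2 * B n / Real.log 2⌉₊ : ℝ) := Nat.le_ceil _
        have h3 : Q n + 1 ≤ p := hQp
        have h4 := (Nat.cast_le (α := ℝ)).mpr h3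
        push_cast [hQ_def] at h4
        linarith
      have hq0 : (0:ℝ) ≤ 2 * B n / Real.log 2 := by positivity
      have hp0' : (0:ℝ) ≤ (p:ℝ) - 1 := le_trans hq0 hp1
      have hprod : (2 * B n / Real.log 2) * Real.log 2 ≤ ((p:ℝ) - 1) * Real.log ((n:ℝ) + 2) :=
        mul_le_mul hp1 hlogν hlog2pos.le hp0'
      have heq : (2 * B n / Real.log 2) * Real.log 2 = 2 * B n :=
        div_mul_cancel₀ _ (ne_of_gt hlog2pos)
      linarith
    have hcomb : Real.log (s ^ p / M p) + B n ≤
        Massoc (fun q => M q * ∏ j ∈ Finset.range (q + 1), r j) t := by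
      calc Real.log (s ^ p / M p) + B n
          ≤ Real.log (s ^ p / M p) + ((p:ℝ) - 1) * Real.log ((n:ℝ) + 2) / 2 := by linarith
        _ = Real.log (t ^ p / (M p * Real.sqrt ((n:ℝ) + 2) ^ (p + 1))) := hstep2.symm
        _ ≤ Real.log (t ^ p / L p) := hstep1
        _ ≤ _ := hFp
    have hCfB : Cf n ≤ Real.exp (B n) := by
      rw [← Real.exp_log (hCf n)]
      exact Real.exp_le_exp.mpr (le_max_left _ _)
    have hg1 := hRf n t hRfT
    rw [← hs_def] at hg1
    set X : ℝ := Massoc (fun q => M q * ∏ j ∈ Finset.range (q + 1), r j) t with hX_def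
    calc g t ≤ Cf n * Real.exp (Massoc M s) := hg1
      _ ≤ Cf n * Real.exp (X - B n) := by
          apply mul_le_mul_of_nonneg_left (Real.exp_le_exp.mpr ?_) (hCf n).le
          calc Massoc M s ≤ Real.log (s ^ p / M p) := hfp
            _ ≤ X - B n := by linarith
      _ ≤ 1 * Real.exp X := by
          rw [Real.exp_sub, one_mul]
          calc Cf n * (Real.exp X / Real.exp (B n))
              = (Cf n / Real.exp (B n)) * Real.exp X := by ring
            _ ≤ 1 * Real.exp X := by
                apply mul_le_mul_of_nonneg_right ?_ (Real.exp_pos X).le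
                exact (div_le_one (Real.exp_pos _)).mpr hCfB
            _ = Real.exp X := one_mul _
end

section
/- Let M(t) be the associated function of a weight sequence M_p satisfying (M.1) and (M.2), and let g : [a,∞) → [0,∞). If g(t) = O(e^{-M_{r_j}(t)}) as t → ∞ for every non-decreasing sequence (r_j) tending to infinity (where M_{r_j} is the associated function of p ↦ M_p ∏_{j=0}^p r_j), then there exists k > 0 such that g(t) = O(e^{-M(kt)}). -/
open Real Filter

/-- A sequence that is eventually antitone (step by step) is bounded above. -/
lemma bddAbove_of_eventually_succ_le (f : ℕ → ℝ) (J : ℕ)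
    (h : ∀ q, J ≤ q → f (q + 1) ≤ f q) : BddAbove (Set.range f) := by
  refine ⟨(Finset.range (J + 1)).sup' ⟨0, by simp⟩ f, ?_⟩
  rintro x ⟨q, rfl⟩
  induction q with
  | zero => exact Finset.le_sup' f (by simp)
  | succ m ih =>
    rcases le_or_gt J m with hm | hm
    · exact (h m hm).trans ih
    · exact Finset.le_sup' f (Finset.mem_range.mpr (by omega))

/-- From (M.1) and `M 0 = 1` we get `M 1 * M q ≤ M (q+1)`. -/
lemma M1_mul_le (M : ℕ → ℝ) (hpos : ∀ p, 0 < M p) (hM0 : M 0 = 1)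
    (hM1 : ∀ p : ℕ, 1 ≤ p → M p ^ 2 ≤ M (p - 1) * M (p + 1)) :
    ∀ q, M 1 * M q ≤ M (q + 1) := by
  intro q
  induction q with
  | zero => rw [hM0, mul_one]
  | succ m ih =>
    have hk := hM1 (m + 1) (by omega)
    simp only [Nat.add_sub_cancel] at hk
    have key : M m * (M 1 * M (m + 1)) ≤ M m * M (m + 2) := by
      nlinarith [hpos m, hpos (m + 1), hpos (m + 2), hpos 1]
    exact le_of_mul_le_mul_left key (hpos m)

/-- Lemma 4.4(ii): if `g : [a,∞) → [0,∞)` satisfies `g(t) = O(e^{-M_{r_j}(t)})` as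
`t → ∞` for every non-decreasing sequence `(r_j)` of positive reals tending to `∞`
(where `M_{r_j}` is the associated function of `p ↦ M_p ∏_{j=0}^p r_j`), then there
exists `k > 0` with `g(t) = O(e^{-M(kt)})`. -/
theorem growth_comparison_negligible (M : ℕ → ℝ) (hpos : ∀ p, 0 < M p) (hM0 : M 0 = 1)
    (hM1 : ∀ p : ℕ, 1 ≤ p → M p ^ 2 ≤ M (p - 1) * M (p + 1))
    (A H : ℝ) (hA : 1 ≤ A) (hH : 1 ≤ H)
    (hM2 : ∀ p q : ℕ, M (p + q) ≤ A * H ^ (p + q) * M p * M q)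
    (a : ℝ) (g : ℝ → ℝ) (hg : ∀ t, a ≤ t → 0 ≤ g t)
    (hO : ∀ r : ℕ → ℝ, (∀ j, 0 < r j) → Monotone r → Tendsto r atTop atTop →
      ∃ C > (0 : ℝ), ∃ R : ℝ, ∀ t, R ≤ t →
        g t ≤ C * Real.exp
          (-(Massoc (fun p => M p * ∏ j ∈ Finset.range (p + 1), r j) t))) :
    ∃ k > (0 : ℝ), ∃ C > (0 : ℝ), ∃ R : ℝ, ∀ t, R ≤ t →
      g t ≤ C * Real.exp (-(Massoc M (k * t))) := by
  by_contra hcon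
  push_neg at hcon
  -- for every `n`, the bound with `k = 1/(n+1)`, `C = (n+1)^2`, `R = n+1` fails
  have key : ∀ n : ℕ, ∃ t : ℝ, ((n : ℝ) + 1) ≤ t ∧
      ((n : ℝ) + 1) ^ 2 * Real.exp (-(Massoc M ((1 / ((n : ℝ) + 1)) * t))) < g t := by
    intro n
    obtain ⟨t, h1, h2⟩ := hcon (1 / ((n : ℝ) + 1)) (by positivity)
      (((n : ℝ) + 1) ^ 2) (by positivity) ((n : ℝ) + 1)
    exact ⟨t, h1, h2⟩
  choose t ht hgt using key
  -- choose nearly optimal indices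
  have keyp : ∀ n : ℕ, ∃ q : ℕ,
      Massoc M ((1 / ((n : ℝ) + 1)) * t n) - 1 <
        Real.log (((1 / ((n : ℝ) + 1)) * t n) ^ q / M q) := by
    intro n
    have h1 : Massoc M ((1 / ((n : ℝ) + 1)) * t n) - 1 <
        Massoc M ((1 / ((n : ℝ) + 1)) * t n) := sub_one_lt _
    rw [Massoc] at h1
    exact exists_lt_of_lt_ciSup h1
  choose p hp using keyp
  -- build the sequence r
  set T : ℕ → Set ℕ := fun j => insert (j + 1) {m | ∃ n, j ≤ p n ∧ m = n + 1} with hT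
  set rn : ℕ → ℕ := fun j => sInf (T j) with hrn
  have hTne : ∀ j, (T j).Nonempty := fun j => ⟨j + 1, Set.mem_insert _ _⟩
  have hmem : ∀ j, rn j ∈ T j := fun j => Nat.sInf_mem (hTne j)
  have hrpos : ∀ j, 1 ≤ rn j := by
    intro j
    have := hmem j
    simp only [hT, Set.mem_insert_iff, Set.mem_setOf_eq] at this
    rcases this with h | ⟨m, _, h⟩ <;> omega
  have hrle : ∀ j m, j ≤ p m → rn j ≤ m + 1 := fun j m h =>
    Nat.sInf_le (Set.mem_insert_iff.mpr (Or.inr ⟨m, h, rfl⟩))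
  have hrj : ∀ j, rn j ≤ j + 1 := fun j => Nat.sInf_le (Set.mem_insert _ _)
  have hmono : Monotone rn := by
    apply monotone_nat_of_le_succ
    intro j
    have := hmem (j + 1)
    simp only [hT, Set.mem_insert_iff, Set.mem_setOf_eq] at this
    rcases this with h | ⟨m, hm, h⟩
    · have := hrj j; omega
    · have := hrle j m (le_trans (Nat.le_succ j) hm); omega
  set r : ℕ → ℝ := fun j => (rn j : ℝ) with hrdef
  have hr0 : ∀ j, 0 < r j := fun j => by
    have := hrpos j; simp only [hrdef]; exact_mod_cast Nat.lt_of_lt_of_le Nat.zero_lt_one this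
  have hrmono : Monotone r := fun i j hij => Nat.cast_le.mpr (hmono hij)
  have hrtop : Tendsto r atTop atTop := by
    have hn : Tendsto rn atTop atTop := by
      rw [tendsto_atTop_atTop]
      intro b
      refine ⟨max b ((Finset.range b).sup p + 1), fun j hj => ?_⟩
      have hjb : b ≤ j := le_trans (le_max_left _ _) hj
      have hjs : (Finset.range b).sup p + 1 ≤ j := le_trans (le_max_right _ _) hj
      have := hmem j
      simp only [hT, Set.mem_insert_iff, Set.mem_setOf_eq] at this
      rcases this with h | ⟨m, hm, h⟩
      · omega
      · -- if m + 1 < b then p m ≤ sup < j, contradicting j ≤ p m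
        by_contra hlt
        push_neg at hlt
        have hmb : m < b := by omega
        have := Finset.le_sup (f := p) (Finset.mem_range.mpr hmb)
        omega
    exact tendsto_natCast_atTop_atTop.comp hn
  obtain ⟨C, hC, R, hR⟩ := hO r hr0 hrmono hrtop
  -- pick a large n
  set n : ℕ := ⌈max R (C * Real.exp 1)⌉₊ with hndef
  set N : ℝ := (n : ℝ) + 1 with hNdef
  have hN1 : (1 : ℝ) ≤ N := by
    rw [hNdef]
    have : (0 : ℝ) ≤ (n : ℝ) := Nat.cast_nonneg n
    linarith
  have hN0 : (0 : ℝ) < N := lt_of_lt_of_le one_pos hN1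
  have hmaxn : max R (C * Real.exp 1) ≤ (n : ℝ) := Nat.le_ceil _
  have htn : N ≤ t n := ht n
  have htpos : (0 : ℝ) < t n := lt_of_lt_of_le hN0 htn
  have hRt : R ≤ t n := by
    have : R ≤ (n : ℝ) := le_trans (le_max_left _ _) hmaxn
    linarith [htn, hNdef ▸ (by linarith : (n : ℝ) ≤ N)]
  have hgb := hR (t n) hRt
  -- boundedness of the r-associated family at t n
  have hstep := M1_mul_le M hpos hM0 hM1
  obtain ⟨J, hJ⟩ : ∃ J, ∀ j, J ≤ j → t n / M 1 ≤ r j := by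
    have := (hrtop.eventually_ge_atTop (t n / M 1))
    rw [eventually_atTop] at this
    exact this
  have hbdd : BddAbove (Set.range fun q =>
      Real.log (t n ^ q / (M q * ∏ j ∈ Finset.range (q + 1), r j))) := by
    apply bddAbove_of_eventually_succ_le _ J
    intro q hq
    have hPpos : (0 : ℝ) < ∏ j ∈ Finset.range (q + 1), r j :=
      Finset.prod_pos fun j _ => hr0 j
    have hlog : t n ^ (q + 1) / (M (q + 1) * ∏ j ∈ Finset.range (q + 1 + 1), r j)
        ≤ t n ^ q / (M q * ∏ j ∈ Finset.range (q + 1), r j) := by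
      have hPpos' : (0 : ℝ) < ∏ j ∈ Finset.range (q + 1 + 1), r j :=
        Finset.prod_pos fun j _ => hr0 j
      rw [div_le_div_iff₀ (mul_pos (hpos (q + 1)) hPpos') (mul_pos (hpos q) hPpos)]
      have hPs : ∏ j ∈ Finset.range (q + 1 + 1), r j =
          (∏ j ∈ Finset.range (q + 1), r j) * r (q + 1) := Finset.prod_range_succ r (q + 1)
      have h1 : t n ≤ M 1 * r (q + 1) := by
        have h2 := hJ (q + 1) (by omega)
        rw [div_le_iff₀ (hpos 1)] at h2
        linarith [mul_comm (r (q + 1)) (M 1)]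
      have h2 : t n * M q ≤ M (q + 1) * r (q + 1) :=
        calc t n * M q ≤ (M 1 * r (q + 1)) * M q :=
              mul_le_mul_of_nonneg_right h1 (hpos q).le
          _ = (M 1 * M q) * r (q + 1) := by ring
          _ ≤ M (q + 1) * r (q + 1) := mul_le_mul_of_nonneg_right (hstep q) (hr0 (q + 1)).le
      rw [hPs, pow_succ]
      calc t n ^ q * t n * (M q * ∏ j ∈ Finset.range (q + 1), r j)
          = (t n * M q) * (t n ^ q * ∏ j ∈ Finset.range (q + 1), r j) := by ring
        _ ≤ (M (q + 1) * r (q + 1)) * (t n ^ q * ∏ j ∈ Finset.range (q + 1), r j) :=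
            mul_le_mul_of_nonneg_right h2 (by positivity)
        _ = t n ^ q * (M (q + 1) * ((∏ j ∈ Finset.range (q + 1), r j) * r (q + 1))) := by ring
    have hden : (0 : ℝ) < M (q + 1) * ∏ j ∈ Finset.range (q + 1 + 1), r j :=
      mul_pos (hpos (q + 1)) (Finset.prod_pos fun j _ => hr0 j)
    exact Real.log_le_log (div_pos (pow_pos htpos _) hden) hlog
  -- lower bound for the r-associated function at t n
  have hlow : Real.log (t n ^ p n / (M (p n) * ∏ j ∈ Finset.range (p n + 1), r j)) ≤
      Massoc (fun q => M q * ∏ j ∈ Finset.range (q + 1), r j) (t n) := by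
    rw [Massoc]
    exact le_ciSup hbdd (p n)
  -- the product bound
  have hPN : ∏ j ∈ Finset.range (p n + 1), r j ≤ N ^ (p n + 1) := by
    calc ∏ j ∈ Finset.range (p n + 1), r j ≤ ∏ _j ∈ Finset.range (p n + 1), N := by
          apply Finset.prod_le_prod (fun j _ => (hr0 j).le)
          intro j hj
          have hjp : j ≤ p n := Nat.lt_succ_iff.mp (Finset.mem_range.mp hj)
          show (rn j : ℝ) ≤ N
          rw [hNdef]
          exact_mod_cast hrle j n hjp
      _ = N ^ (p n + 1) := by rw [Finset.prod_const, Finset.card_range]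
  -- comparison of the two associated functions
  set s : ℝ := (1 / N) * t n with hsdef
  have hs0 : (0 : ℝ) < s := by positivity
  have hPpos : (0 : ℝ) < ∏ j ∈ Finset.range (p n + 1), r j :=
    Finset.prod_pos fun j _ => hr0 j
  have key5 : Real.log (s ^ p n / M (p n)) - Real.log N ≤
      Real.log (t n ^ p n / (M (p n) * ∏ j ∈ Finset.range (p n + 1), r j)) := by
    have hsM : (0 : ℝ) < s ^ p n / M (p n) := div_pos (pow_pos hs0 _) (hpos _)
    rw [← Real.log_div hsM.ne' hN0.ne']
    have e1 : s ^ p n / M (p n) / N = t n ^ p n / (M (p n) * N ^ (p n + 1)) := by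
      rw [hsdef]
      field_simp
      have hNp : N ^ p n * N⁻¹ ^ p n = 1 := by rw [← mul_pow, mul_inv_cancel₀ hN0.ne', one_pow]
      linear_combination (t n ^ p n * N * (M (p n))⁻¹) * hNp
    rw [e1]
    have hd1 : (0 : ℝ) < M (p n) * ∏ j ∈ Finset.range (p n + 1), r j :=
      mul_pos (hpos _) hPpos
    apply Real.log_le_log (div_pos (pow_pos htpos _) (mul_pos (hpos _) (by positivity)))
    rw [div_le_div_iff₀ (mul_pos (hpos _) (by positivity)) hd1]
    exact mul_le_mul_of_nonneg_left
      (mul_le_mul_of_nonneg_left hPN (hpos (p n)).le) (pow_nonneg htpos.le _)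
  -- put everything together
  have hps := hp n
  have hMr : Massoc M s - 1 - Real.log N <
      Massoc (fun q => M q * ∏ j ∈ Finset.range (q + 1), r j) (t n) := by
    have : Massoc M s - 1 < Real.log (s ^ p n / M (p n)) := hps
    linarith
  have hexp : Real.exp (-(Massoc (fun q => M q * ∏ j ∈ Finset.range (q + 1), r j) (t n))) ≤
      Real.exp (-(Massoc M s)) * (Real.exp 1 * N) := by
    have : Real.exp (-(Massoc (fun q => M q * ∏ j ∈ Finset.range (q + 1), r j) (t n))) ≤
        Real.exp (-(Massoc M s - 1 - Real.log N)) := Real.exp_le_exp.mpr (by linarith)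
    calc Real.exp (-(Massoc (fun q => M q * ∏ j ∈ Finset.range (q + 1), r j) (t n)))
        ≤ Real.exp (-(Massoc M s - 1 - Real.log N)) := this
      _ = Real.exp (-(Massoc M s)) * (Real.exp 1 * N) := by
          rw [show -(Massoc M s - 1 - Real.log N) = -(Massoc M s) + (1 + Real.log N) by ring,
            Real.exp_add, Real.exp_add, Real.exp_log hN0]
  have hbig : N ^ 2 * Real.exp (-(Massoc M s)) < g (t n) := hgt n
  have hub : g (t n) ≤ C * (Real.exp (-(Massoc M s)) * (Real.exp 1 * N)) :=
    le_trans hgb (mul_le_mul_of_nonneg_left hexp hC.le)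
  have hE : (0 : ℝ) < Real.exp (-(Massoc M s)) := Real.exp_pos _
  have h9 : N ^ 2 * Real.exp (-(Massoc M s)) ≤
      C * (Real.exp (-(Massoc M s)) * (Real.exp 1 * N)) := le_of_lt (hbig.trans_le hub)
  have hNN : N * N < (C * Real.exp 1) * N := by nlinarith [h9, hE, hbig.trans_le hub]
  have hNlt : N < C * Real.exp 1 := lt_of_mul_lt_mul_right hNN hN0.le
  have hce : C * Real.exp 1 ≤ (n : ℝ) := le_trans (le_max_right _ _) hmaxn
  have : (n : ℝ) < N := by simp [hNdef]
  linarith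
end

section
/- Let M_p be a weight sequence satisfying (M.1) and suppose g : [a,∞) → [0,∞) satisfies: for every k > 0 there is R > 0 with g(t) ≤ A e^{M(kt)} for all t ≥ R (A a fixed constant). Then there exists a subordinate function ρ : [0,∞) → [0,∞) (continuous, increasing, ρ(0) = 0, ρ(t) = o(t)) and constants C, t_0 such that g(t) ≤ C e^{M(ρ(t))} for all t ≥ t_0. -/
open Real Filter Set

lemma Massoc_zero (M : ℕ → ℝ) (hM0 : M 0 = 1) : Massoc M 0 = 0 := by
  have h : (fun p : ℕ => Real.log ((0:ℝ) ^ p / M p)) = fun _ => (0:ℝ) := by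
    funext p
    cases p with
    | zero => simp [hM0]
    | succ n => simp
  rw [Massoc, h, ciSup_const]

lemma Massoc_mono (M : ℕ → ℝ) (hpos : ∀ p, 0 < M p) {x y : ℝ}
    (hB : BddAbove (Set.range fun p : ℕ => Real.log (y ^ p / M p)))
    (hx : 0 < x) (hxy : x ≤ y) : Massoc M x ≤ Massoc M y := by
  refine ciSup_mono hB fun p => ?_
  have hMp := hpos p
  have h1 : (0:ℝ) < x ^ p / M p := by positivity
  refine Real.log_le_log h1 ?_
  gcongr

/-- If `g : [a,∞) → [0,∞)` satisfies: for every `k > 0` there is `R` with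
`g(t) ≤ A e^{M(kt)}` for all `t ≥ R` (`A` a fixed constant), then there exists a
subordinate function `ρ : [0,∞) → [0,∞)` (continuous, increasing, `ρ(0) = 0`,
`ρ(t) = o(t)`) and constants `C, t₀` such that `g(t) ≤ C e^{M(ρ(t))}` for `t ≥ t₀`. -/
theorem exists_subordinate_bound (M : ℕ → ℝ) (hpos : ∀ p, 0 < M p) (hM0 : M 0 = 1)
    (hM1 : ∀ p : ℕ, 1 ≤ p → M p ^ 2 ≤ M (p - 1) * M (p + 1))
    (a A : ℝ) (hA : 0 < A) (g : ℝ → ℝ) (hg : ∀ t, a ≤ t → 0 ≤ g t)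
    (hO : ∀ k > (0 : ℝ), ∃ R : ℝ, ∀ t, R ≤ t → g t ≤ A * Real.exp (Massoc M (k * t))) :
    ∃ ρ : ℝ → ℝ,
      ContinuousOn ρ (Ici 0) ∧ MonotoneOn ρ (Ici 0) ∧ ρ 0 = 0 ∧
      (∀ t, 0 ≤ t → 0 ≤ ρ t) ∧
      Tendsto (fun t => ρ t / t) atTop (nhds 0) ∧
      ∃ C : ℝ, ∃ t₀ : ℝ, ∀ t, t₀ ≤ t → g t ≤ C * Real.exp (Massoc M (ρ t)) := by
  classical
  by_cases hB : ∀ x : ℝ, 0 < x → BddAbove (Set.range fun p : ℕ => Real.log (x ^ p / M p))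
  · -- Massoc is a genuine (finite) supremum everywhere, hence monotone
    choose R hR using fun n : ℕ => hO (1/((n:ℝ)+2)) (by positivity)
    let s : ℕ → ℝ := fun n => Nat.rec (max (R 0) 1) (fun m sm => max (R (m+1)) (4 * sm)) n
    have hs0 : s 0 = max (R 0) 1 := rfl
    have hsucc : ∀ n, s (n+1) = max (R (n+1)) (4 * s n) := fun n => rfl
    have hs1 : ∀ n, 1 ≤ s n := by
      intro n; induction n with
      | zero => exact le_max_right _ _
      | succ n ih => rw [hsucc]; exact le_trans (by linarith) (le_max_right _ _)
    have hspos : ∀ n, 0 < s n := fun n => lt_of_lt_of_le one_pos (hs1 n)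
    have hs4 : ∀ n, 4 * s n ≤ s (n+1) := fun n => by rw [hsucc]; exact le_max_right _ _
    have hsR : ∀ n, R n ≤ s n := by
      intro n; cases n with
      | zero => exact le_max_left _ _
      | succ m => rw [hsucc]; exact le_max_left _ _
    have hslt : ∀ n, s n < s (n+1) := fun n => lt_of_lt_of_le (by nlinarith [hspos n]) (hs4 n)
    have hsmono : Monotone s := monotone_nat_of_le_succ fun n => (hslt n).le
    have hsge : ∀ n : ℕ, (n:ℝ) + 1 ≤ s n := by
      intro n; induction n with
      | zero => simpa using hs1 0
      | succ n ih => push_cast; nlinarith [hs4 n, hs1 n]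
    -- values and slopes
    let v : ℕ → ℝ := fun n => s n / ((n:ℝ) + 1)
    let σ : ℕ → ℝ := fun n => (v (n+1) - v n) / (s (n+1) - s n)
    have hΔ : ∀ n, 0 < s (n+1) - s n := fun n => sub_pos.mpr (hslt n)
    have hvdef : ∀ n, v n = s n / ((n:ℝ) + 1) := fun n => rfl
    have hvpos : ∀ n : ℕ, 0 < v n := fun n => by
      have := hspos n; rw [hvdef]; positivity
    have hv_le_s : ∀ n, v n ≤ s n := fun n => by
      rw [hvdef]
      rw [div_le_iff₀ (by positivity)]
      nlinarith [hspos n]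
    have hσdef : ∀ n, σ n = (v (n+1) - v n) / (s (n+1) - s n) := fun n => rfl
    have hvsucc : ∀ n, v (n+1) = v n + σ n * (s (n+1) - s n) := fun n => by
      rw [hσdef, div_mul_cancel₀ _ (hΔ n).ne']; ring
    have hσ_ub : ∀ n, σ n ≤ 1 / ((n:ℝ) + 2) := by
      intro n
      rw [hσdef, div_le_div_iff₀ (hΔ n) (by positivity), hvdef (n+1), hvdef n]
      have h1 : (0:ℝ) < (n:ℝ) + 1 := by positivity
      have h2 : (0:ℝ) < (n:ℝ) + 2 := by positivity
      rw [div_sub_div _ _ (by push_cast; positivity) h1.ne']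
      rw [div_mul_eq_mul_div, div_le_iff₀ (by positivity)]
      push_cast
      nlinarith [hspos n, hspos (n+1)]
    have hσ_lb : ∀ n : ℕ, 1 / ((n:ℝ) + 3) ≤ σ n := by
      intro n
      rw [hσdef, div_le_div_iff₀ (by positivity) (hΔ n), hvdef (n+1), hvdef n]
      have h1 : (0:ℝ) < (n:ℝ) + 1 := by positivity
      rw [div_sub_div _ _ (by push_cast; positivity) h1.ne']
      rw [div_mul_eq_mul_div, le_div_iff₀ (by push_cast; positivity)]
      push_cast
      nlinarith [hs4 n, hspos n]
    have hσpos : ∀ n, 0 < σ n := fun n => lt_of_lt_of_le (by positivity) (hσ_lb n)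
    have hσ_anti : ∀ m n : ℕ, m ≤ n → σ n ≤ σ m := by
      have hstep : ∀ n, σ (n+1) ≤ σ n := fun n =>
        le_trans (le_trans (hσ_ub (n+1)) (by
          apply div_le_div_of_nonneg_left one_pos.le (by positivity)
          push_cast; linarith)) (hσ_lb n)
      intro m n h
      exact antitone_nat_of_succ_le hstep h
    -- affine functions
    let L : ℕ → ℝ → ℝ := fun m t => Nat.casesOn m t fun k => v k + σ k * (t - s k)
    have hL0 : ∀ t, L 0 t = t := fun t => rfl
    have hLs : ∀ k t, L (k+1) t = v k + σ k * (t - s k) := fun k t => rfl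
    have hLmono : ∀ m, Monotone (L m) := by
      intro m x y hxy
      cases m with
      | zero => exact hxy
      | succ k =>
        rw [hLs, hLs]
        have := (hσpos k).le
        nlinarith
    -- every affine function lies above every node
    have hpoint : ∀ m j : ℕ, v j ≤ L m (s j) := by
      have hA : ∀ k : ℕ, ∀ j ≤ k, v j ≤ L (k+1) (s j) := by
        intro k
        induction k with
        | zero => intro j hj; interval_cases j; rw [hLs]; simp
        | succ k ih =>
          intro j hj
          rcases Nat.eq_or_lt_of_le hj with h | h
          · subst h; rw [hLs (k+1)]; simp
          · have hjk : j ≤ k := Nat.lt_succ_iff.mp h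
            have h1 := ih j hjk
            rw [hLs k] at h1
            rw [hLs (k+1)]
            have h2 : σ (k+1) ≤ σ k := hσ_anti k (k+1) (Nat.le_succ k)
            have h3 : s j ≤ s k := hsmono hjk
            have h4 := hvsucc k
            have h5 := hΔ k
            nlinarith [sub_nonneg.mpr h3]
      have hB2 : ∀ k d : ℕ, v (k + d) ≤ L (k+1) (s (k + d)) := by
        intro k d
        induction d with
        | zero => rw [hLs]; simp
        | succ d ih =>
          rw [hLs] at ih ⊢
          have h2 : σ (k + d) ≤ σ k := hσ_anti k (k+d) (Nat.le_add_right _ _)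
          have h4 := hvsucc (k + d)
          have h5 := hΔ (k + d)
          have : k + (d + 1) = (k + d) + 1 := by ring
          rw [this]
          nlinarith
      intro m j
      cases m with
      | zero => rw [hL0]; exact hv_le_s j
      | succ k =>
        rcases le_total j k with h | h
        · exact hA k j h
        · have := hB2 k (j - k)
          rwa [Nat.add_sub_cancel' h] at this
    have hLnn : ∀ m : ℕ, ∀ t, 0 ≤ t → 0 ≤ L m t := by
      intro m t ht
      cases m with
      | zero => exact ht
      | succ k =>
        refine le_trans ?_ (hLmono (k+1) ht)
        rw [hLs]
        have h1 : σ k ≤ 1 / ((k:ℝ) + 2) := hσ_ub k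
        have h2 : v k = s k / ((k:ℝ)+1) := hvdef k
        have h3 := hspos k
        have h4 : σ k * s k ≤ s k / ((k:ℝ)+1) := by
          rw [div_eq_mul_inv]
          have : σ k ≤ ((k:ℝ)+1)⁻¹ := le_trans h1 (by
            rw [div_le_iff₀ (by positivity), inv_mul_eq_div, le_div_iff₀ (by positivity)]
            push_cast; nlinarith)
          nlinarith
        rw [h2]; nlinarith
    have hbdd : ∀ t : ℝ, 0 ≤ t → BddBelow (Set.range fun m => L m t) := by
      intro t ht
      exact ⟨0, by rintro y ⟨m, rfl⟩; exact hLnn m t ht⟩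
    -- the subordinate function
    let ρ : ℝ → ℝ := fun t => ⨅ m, L m t
    have hρdef : ∀ t, ρ t = ⨅ m, L m t := fun t => rfl
    have hρ_le : ∀ t : ℝ, 0 ≤ t → ∀ m, ρ t ≤ L m t := fun t ht m => ciInf_le (hbdd t ht) m
    have hρ_nn : ∀ t : ℝ, 0 ≤ t → 0 ≤ ρ t := fun t ht => le_ciInf fun m => hLnn m t ht
    have hρ0 : ρ 0 = 0 := le_antisymm (by simpa [hL0] using hρ_le 0 le_rfl 0) (hρ_nn 0 le_rfl)
    have hρ_mono : MonotoneOn ρ (Ici 0) := by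
      intro x hx y hy hxy
      exact le_ciInf fun m => le_trans (hρ_le x hx m) (hLmono m hxy)
    have hρ_le_id : ∀ t : ℝ, 0 ≤ t → ρ t ≤ t := fun t ht => by
      simpa [hL0] using hρ_le t ht 0
    -- upper bound: ρ t ≤ t / (n+1) for t ≥ s n
    have hρ_ub : ∀ n : ℕ, ∀ t : ℝ, s n ≤ t → ρ t ≤ t / ((n:ℝ) + 1) := by
      intro n t hst
      have ht : (0:ℝ) ≤ t := le_trans (hspos n).le hst
      refine le_trans (hρ_le t ht (n+1)) ?_
      rw [hLs n t, hvdef n]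
      have h1 : σ n ≤ 1 / ((n:ℝ) + 1) := le_trans (hσ_ub n)
        (by apply div_le_div_of_nonneg_left one_pos.le (by positivity); push_cast; linarith)
      have h2 : (0:ℝ) < (n:ℝ) + 1 := by positivity
      have hσn1 : σ n * ((n:ℝ)+1) ≤ 1 := by
        rw [← le_div_iff₀ h2]; exact h1
      have key := mul_le_mul_of_nonneg_right
        (mul_le_mul_of_nonneg_right hσn1 (sub_nonneg.mpr hst)) h2.le
      rw [div_add' _ _ _ h2.ne', div_le_div_iff₀ h2 h2]
      nlinarith [key]
    -- lower bound: ρ t ≥ t / (n+2) for s n ≤ t ≤ s (n+1)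
    have hρ_lb : ∀ n : ℕ, ∀ t : ℝ, s n ≤ t → t ≤ s (n+1) → t / ((n:ℝ) + 2) ≤ ρ t := by
      intro n t h1 h2
      refine le_ciInf fun m => ?_
      set lam : ℝ := (t - s n) / (s (n+1) - s n) with hlam
      have hΔn := hΔ n
      have hlam0 : 0 ≤ lam := div_nonneg (by linarith) hΔn.le
      have hlam1 : lam ≤ 1 := by rw [hlam, div_le_one hΔn]; linarith
      have hrep : t = (1 - lam) * s n + lam * s (n+1) := by
        have hl : lam * (s (n+1) - s n) = t - s n := by
          rw [hlam, div_mul_cancel₀ _ hΔn.ne']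
        linarith
      have haff : L m t = (1 - lam) * L m (s n) + lam * L m (s (n+1)) := by
        cases m with
        | zero =>
          rw [hL0 t, hL0 (s n), hL0 (s (n+1))]
          exact hrep
        | succ k =>
          rw [hLs k t, hLs k (s n), hLs k (s (n+1))]
          rw [hrep]; ring
      have hn2 : (0:ℝ) < (n:ℝ) + 2 := by positivity
      have hb1 : s n / ((n:ℝ)+2) ≤ L m (s n) := by
        refine le_trans ?_ (hpoint m n)
        rw [hvdef]
        apply div_le_div_of_nonneg_left (hspos n).le (by positivity)
        push_cast; linarith
      have hb2 : s (n+1) / ((n:ℝ)+2) ≤ L m (s (n+1)) := by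
        refine le_trans (le_of_eq ?_) (hpoint m (n+1))
        rw [hvdef (n+1)]
        push_cast
        ring
      calc t / ((n:ℝ)+2) = (1 - lam) * (s n / ((n:ℝ)+2)) + lam * (s (n+1) / ((n:ℝ)+2)) := by
            rw [hrep]; ring
        _ ≤ (1 - lam) * L m (s n) + lam * L m (s (n+1)) :=
            add_le_add (mul_le_mul_of_nonneg_left hb1 (by linarith))
              (mul_le_mul_of_nonneg_left hb2 hlam0)
        _ = L m t := haff.symm
    -- concavity and continuity
    have hconc : ConcaveOn ℝ (Ici 0) ρ := by
      refine ⟨convex_Ici 0, ?_⟩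
      intro x hx y hy p q hp hq hpq
      refine le_ciInf fun m => ?_
      simp only [smul_eq_mul]
      have haff : L m (p * x + q * y) = p * L m x + q * L m y := by
        cases m with
        | zero =>
          rw [hL0 x, hL0 y, hL0 (p * x + q * y)]
        | succ k =>
          rw [hLs k x, hLs k y, hLs k (p * x + q * y)]
          have : q = 1 - p := by linarith
          subst this
          ring
      rw [haff]
      exact add_le_add (mul_le_mul_of_nonneg_left (hρ_le x hx m) hp)
        (mul_le_mul_of_nonneg_left (hρ_le y hy m) hq)
    have hcont : ContinuousOn ρ (Ici 0) := by
      have hint : ContinuousOn ρ (Ioi 0) := by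
        have := hconc.continuousOn_interior
        rwa [interior_Ici] at this
      intro x hx
      rcases eq_or_lt_of_le (mem_Ici.mp hx) with h | h
      · -- continuity at 0 within Ici 0 by squeeze
        subst h
        have h1 : Tendsto ρ (nhdsWithin 0 (Ici 0)) (nhds 0) := by
          apply squeeze_zero'
          · filter_upwards [eventually_mem_nhdsWithin] with t ht
            exact hρ_nn t ht
          · filter_upwards [eventually_mem_nhdsWithin] with t ht
            exact hρ_le_id t ht
          · exact Filter.Tendsto.mono_left (continuous_id.tendsto 0) nhdsWithin_le_nhds
        unfold ContinuousWithinAt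
        rwa [hρ0]
      · exact ((hint.continuousAt (Ioi_mem_nhds h)).continuousWithinAt)
    -- the limit ρ t / t → 0
    have hlim : Tendsto (fun t => ρ t / t) atTop (nhds 0) := by
      rw [Metric.tendsto_atTop]
      intro ε hε
      obtain ⟨n, hn⟩ := exists_nat_one_div_lt hε
      refine ⟨s n, fun t ht => ?_⟩
      have htpos : (0:ℝ) < t := lt_of_lt_of_le (hspos n) ht
      have h1 : ρ t / t ≤ 1 / ((n:ℝ)+1) := by
        have h2 := hρ_ub n t ht
        calc ρ t / t ≤ (t / ((n:ℝ)+1)) / t := by gcongr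
          _ = 1 / ((n:ℝ)+1) := by field_simp
      have h0 : 0 ≤ ρ t / t := div_nonneg (hρ_nn t htpos.le) htpos.le
      rw [Real.dist_eq, sub_zero, abs_of_nonneg h0]
      exact lt_of_le_of_lt h1 hn
    refine ⟨ρ, hcont, hρ_mono, hρ0, hρ_nn, hlim, A, s 0, fun t ht => ?_⟩
    have htpos : (0:ℝ) < t := lt_of_lt_of_le (hspos 0) ht
    have hex : ∃ n : ℕ, t < s (n+1) := by
      obtain ⟨n, hn⟩ := exists_nat_gt t
      refine ⟨n, lt_of_lt_of_le hn (le_trans ?_ (hsge (n+1)))⟩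
      push_cast; linarith
    set n := Nat.find hex with hn
    have hn2 : t < s (n+1) := Nat.find_spec hex
    have hn1 : s n ≤ t := by
      by_cases h0 : n = 0
      · rw [h0]; exact ht
      · have hlt : n - 1 < Nat.find hex := by omega
        have h2 := Nat.find_min hex hlt
        rw [not_lt] at h2
        have h3 : n - 1 + 1 = n := by omega
        rwa [h3] at h2
    have hbound := hR n t (le_trans (hsR n) hn1)
    have hx1 : (0:ℝ) < 1/((n:ℝ)+2) * t := by positivity
    have hx2 : 1/((n:ℝ)+2) * t ≤ ρ t := by
      rw [one_div, inv_mul_eq_div]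
      exact hρ_lb n t hn1 hn2.le
    have hmm := Massoc_mono M hpos (hB (ρ t) (lt_of_lt_of_le hx1 hx2)) hx1 hx2
    calc g t ≤ A * Real.exp (Massoc M (1/((n:ℝ)+2) * t)) := hbound
      _ ≤ A * Real.exp (Massoc M (ρ t)) :=
          mul_le_mul_of_nonneg_left (Real.exp_le_exp.mpr hmm) hA.le
  · -- degenerate case: the supremum is unbounded, so `Massoc` is junk 0 at large arguments
    push_neg at hB
    obtain ⟨x, hx, hnb⟩ := hB
    obtain ⟨R, hR⟩ := hO 1 one_pos
    refine ⟨fun _ => 0, continuousOn_const, monotoneOn_const, rfl, fun t _ => le_refl 0,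
      by simpa using tendsto_const_nhds, A, max R x, fun t ht => ?_⟩
    have hxt : x ≤ t := le_trans (le_max_right _ _) ht
    have hnb' : ¬ BddAbove (Set.range fun p : ℕ => Real.log (t ^ p / M p)) := by
      rintro ⟨b, hb⟩
      refine hnb ⟨b, ?_⟩
      rintro y ⟨p, rfl⟩
      have hMp := hpos p
      calc Real.log (x ^ p / M p) ≤ Real.log (t ^ p / M p) := by
            refine Real.log_le_log (by positivity) ?_
            gcongr
        _ ≤ b := hb ⟨p, rfl⟩
    have h1 : Massoc M t = 0 := Real.iSup_of_not_bddAbove hnb'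
    have h2 := hR t (le_trans (le_max_left _ _) ht)
    rw [one_mul, h1] at h2
    rw [Massoc_zero M hM0]
    simpa using h2
end

section
/- Let M_p satisfy (M.1) and (M.3)': Σ_{p≥1} M_{p-1}/M_p < ∞. Set M'_p = min_{0 ≤ q ≤ p} M_q M_{p-q}. Then the associated function of M'_p equals 2M, where M is the associated function of M_p, and M'_p satisfies (M.1) and (M.3)'. -/
open Real

/-- `M'_p = min_{0 ≤ q ≤ p} M_q M_{p-q}`. -/
noncomputable def Mprime (M : ℕ → ℝ) (p : ℕ) : ℝ :=
  (Finset.range (p + 1)).inf' Finset.nonempty_range_add_one (fun q => M q * M (p - q))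

section Aux

variable {M : ℕ → ℝ}

/-- Monotonicity of the ratios `M (q+1) / M q` from log-convexity. -/
lemma Maux_ratio_mono (hpos : ∀ p, 0 < M p)
    (hM1 : ∀ p : ℕ, 1 ≤ p → M p ^ 2 ≤ M (p - 1) * M (p + 1)) :
    ∀ q r, q ≤ r → M (q + 1) * M r ≤ M q * M (r + 1) := by
  intro q r h
  induction r, h using Nat.le_induction with
  | base => rw [mul_comm]
  | succ r hqr ih =>
    have h1 := hM1 (r + 1) (by omega)
    simp only [Nat.add_sub_cancel] at h1
    have hr := hpos r
    have hr1 := hpos (r + 1)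
    have hr2 := hpos (r + 2)
    have hq := hpos q
    have hq1 := hpos (q + 1)
    -- M(q+1) M r ≤ M q M(r+1) and M(r+1)^2 ≤ M r M(r+2)
    -- goal: M(q+1) M(r+1) ≤ M q M(r+2)
    have key : M (q + 1) * M (r + 1) * M r ≤ M q * M (r + 2) * M r := by
      have h2 : M (q + 1) * M r * M (r + 1) ≤ M q * M (r + 1) * M (r + 1) :=
        mul_le_mul_of_nonneg_right ih hr1.le
      have h3 : M q * (M (r + 1) * M (r + 1)) ≤ M q * (M r * M (r + 2)) := by
        apply mul_le_mul_of_nonneg_left _ hq.le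
        nlinarith [h1]
      nlinarith [h2, h3]
    exact le_of_mul_le_mul_right key hr

lemma Maux_step (hpos : ∀ p, 0 < M p)
    (hM1 : ∀ p : ℕ, 1 ≤ p → M p ^ 2 ≤ M (p - 1) * M (p + 1)) :
    ∀ p q : ℕ, 2 * q + 1 ≤ p → M (q + 1) * M (p - (q + 1)) ≤ M q * M (p - q) := by
  intro p q h
  have h1 : p - q = (p - (q + 1)) + 1 := by omega
  rw [h1]
  exact Maux_ratio_mono hpos hM1 q (p - (q + 1)) (by omega)

/-- The minimum of `M q * M (p - q)` is attained at `q = p / 2`. -/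
lemma Maux_half_min (hpos : ∀ p, 0 < M p)
    (hM1 : ∀ p : ℕ, 1 ≤ p → M p ^ 2 ≤ M (p - 1) * M (p + 1)) :
    ∀ p q : ℕ, q ≤ p → M (p / 2) * M (p - p / 2) ≤ M q * M (p - q) := by
  intro p
  have key : ∀ k, k ≤ p / 2 →
      M (p / 2) * M (p - p / 2) ≤ M (p / 2 - k) * M (p - (p / 2 - k)) := by
    intro k
    induction k with
    | zero => intro _; simp
    | succ k ih =>
      intro hk
      refine (ih (by omega)).trans ?_
      have hq : p / 2 - k = (p / 2 - (k + 1)) + 1 := by omega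
      rw [hq]
      exact Maux_step hpos hM1 p (p / 2 - (k + 1)) (by omega)
  intro q hq
  rcases le_or_gt q (p / 2) with h | h
  · have := key (p / 2 - q) (by omega)
    rwa [Nat.sub_sub_self h] at this
  · have hq' : p - q ≤ p / 2 := by omega
    have h2 := key (p / 2 - (p - q)) (by omega)
    rw [Nat.sub_sub_self hq'] at h2
    have h3 : p - (p - q) = q := by omega
    rw [h3] at h2
    rw [mul_comm (M q) (M (p - q))]
    exact h2

lemma Mprime_eq (hpos : ∀ p, 0 < M p)
    (hM1 : ∀ p : ℕ, 1 ≤ p → M p ^ 2 ≤ M (p - 1) * M (p + 1)) (p : ℕ) :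
    Mprime M p = M (p / 2) * M (p - p / 2) := by
  apply le_antisymm
  · exact Finset.inf'_le _ (Finset.mem_range.mpr (by omega))
  · exact Finset.le_inf' _ _ fun q hq =>
      Maux_half_min hpos hM1 p q (by have := Finset.mem_range.mp hq; omega)

lemma Mprime_pos (hpos : ∀ p, 0 < M p) (p : ℕ) : 0 < Mprime M p := by
  rw [Mprime, Finset.lt_inf'_iff]
  exact fun q _ => mul_pos (hpos q) (hpos (p - q))

lemma Mprime_le (hpos : ∀ p, 0 < M p) (q r : ℕ) :
    Mprime M (q + r) ≤ M q * M r := by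
  have h : q ∈ Finset.range (q + r + 1) := Finset.mem_range.mpr (by omega)
  have h2 := Finset.inf'_le (s := Finset.range (q + r + 1))
    (fun i => M i * M (q + r - i)) h
  simp only [Nat.add_sub_cancel_left] at h2
  exact h2

end Aux

/-- Roumieu's lemma: if `M_p` satisfies (M.1) and (M.3)', then
`M'_p = min_{q ≤ p} M_q M_{p-q}` has associated function `2M`, and `M'_p`
again satisfies (M.1) and (M.3)'. -/
theorem Mprime_assoc_and_conditions (M : ℕ → ℝ) (hpos : ∀ p, 0 < M p) (hM0 : M 0 = 1)
    (hM1 : ∀ p : ℕ, 1 ≤ p → M p ^ 2 ≤ M (p - 1) * M (p + 1))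
    (hM3' : Summable (fun p : ℕ => M p / M (p + 1))) :
    (∀ t : ℝ, 0 ≤ t → Massoc (Mprime M) t = 2 * Massoc M t) ∧
    (∀ p : ℕ, 1 ≤ p → Mprime M p ^ 2 ≤ Mprime M (p - 1) * Mprime M (p + 1)) ∧
    Summable (fun p : ℕ => Mprime M p / Mprime M (p + 1)) := by
  have hMeq := Mprime_eq hpos hM1
  have hMpos := Mprime_pos (M := M) hpos
  refine ⟨?_, ?_, ?_⟩
  · -- associated function
    intro t ht
    rcases eq_or_lt_of_le ht with h0 | htpos
    · -- t = 0
      have hzero : ∀ (N : ℕ → ℝ), N 0 = 1 → Massoc N 0 = 0 := by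
        intro N hN
        have : (fun p : ℕ => Real.log ((0 : ℝ) ^ p / N p)) = fun _ => 0 := by
          funext p
          cases p with
          | zero => simp [hN]
          | succ n => simp [zero_pow (Nat.succ_ne_zero n)]
        rw [Massoc, this, ciSup_const]
      have hMp0 : Mprime M 0 = 1 := by
        rw [hMeq 0]; simpa using (by rw [hM0]; ring : M 0 * M 0 = 1)
      rw [← h0, hzero (Mprime M) hMp0, hzero M hM0, mul_zero]
    · -- t > 0
      set a : ℕ → ℝ := fun p => Real.log (t ^ p / M p) with ha
      have hapos : ∀ p, 0 < t ^ p / M p := fun p => div_pos (pow_pos htpos p) (hpos p)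
      have hadd : ∀ q r, a q + a r = Real.log (t ^ (q + r) / (M q * M r)) := by
        intro q r
        rw [ha]
        simp only
        rw [← Real.log_mul (hapos q).ne' (hapos r).ne', div_mul_div_comm, ← pow_add]
      -- boundedness of a
      have hten := hM3'.tendsto_atTop_zero
      have hev : ∀ᶠ p in Filter.atTop, M p / M (p + 1) < 1 / t :=
        hten.eventually (gt_mem_nhds (by positivity))
      obtain ⟨N, hN⟩ := Filter.eventually_atTop.mp hev
      have hdec : ∀ p, N ≤ p → a p ≤ a N := by
        intro p hp
        induction p, hp using Nat.le_induction with
        | base => exact le_refl _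
        | succ p hp ih =>
          refine le_trans ?_ ih
          have h1 : M p / M (p + 1) < 1 / t := hN p hp
          have h2 : t * M p < M (p + 1) := by
            rw [div_lt_div_iff₀ (hpos (p + 1)) htpos] at h1
            nlinarith [h1]
          have h3 : t ^ (p + 1) / M (p + 1) ≤ t ^ p / M p := by
            rw [div_le_div_iff₀ (hpos (p + 1)) (hpos p), pow_succ]
            calc t ^ p * t * M p = t ^ p * (t * M p) := by ring
              _ ≤ t ^ p * M (p + 1) :=
                mul_le_mul_of_nonneg_left h2.le (pow_pos htpos p).le
          exact Real.log_le_log (hapos (p + 1)) h3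
      have hbA : BddAbove (Set.range a) := by
        refine ⟨(Finset.range (N + 1)).sup' ⟨0, by simp⟩ a, ?_⟩
        rintro x ⟨p, rfl⟩
        rcases le_or_gt p N with h | h
        · exact Finset.le_sup' a (Finset.mem_range.mpr (by omega))
        · exact le_trans (hdec p h.le)
            (Finset.le_sup' a (Finset.mem_range.mpr (by omega)))
      set A := Massoc M t with hA
      have hAsup : A = ⨆ p, a p := rfl
      have haA : ∀ q, a q ≤ A := fun q => le_ciSup hbA q
      -- each term of M' sup equals a q + a (p - q)
      set b : ℕ → ℝ := fun p => Real.log (t ^ p / Mprime M p) with hb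
      have hbeach : ∀ p, ∃ q, q ≤ p ∧ b p = a q + a (p - q) := by
        intro p
        obtain ⟨q, hqmem, hq⟩ := Finset.exists_mem_eq_inf'
          (Finset.nonempty_range_add_one (n := p)) (fun q => M q * M (p - q))
        have hqp : q ≤ p := by have := Finset.mem_range.mp hqmem; omega
        refine ⟨q, hqp, ?_⟩
        rw [hb]
        simp only
        rw [Mprime, hq, hadd q (p - q), Nat.add_sub_cancel' hqp]
      have hble : ∀ p, b p ≤ A + A := by
        intro p
        obtain ⟨q, hqp, hq⟩ := hbeach p
        rw [hq]
        exact add_le_add (haA q) (haA (p - q))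
      have hbB : BddAbove (Set.range b) :=
        ⟨A + A, by rintro x ⟨p, rfl⟩; exact hble p⟩
      set B := Massoc (Mprime M) t with hBdef
      have hBsup : B = ⨆ p, b p := rfl
      have hBle : B ≤ 2 * A := by
        rw [hBsup]
        exact ciSup_le fun p => le_trans (hble p) (by linarith)
      have hpair : ∀ q r, a q + a r ≤ B := by
        intro q r
        rw [hadd]
        have h1 : Mprime M (q + r) ≤ M q * M r := Mprime_le hpos q r
        have h2 : t ^ (q + r) / (M q * M r) ≤ t ^ (q + r) / Mprime M (q + r) :=
          div_le_div_of_nonneg_left (pow_pos htpos _).le (hMpos _) h1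
        refine le_trans (Real.log_le_log (div_pos (pow_pos htpos _)
          (mul_pos (hpos q) (hpos r))) h2) ?_
        rw [hBsup]
        exact le_ciSup hbB (q + r)
      have h2AB : A + A ≤ B := by
        have h1 : ∀ q, a q ≤ B - A := by
          intro q
          have h2 : A ≤ B - a q := by
            rw [hAsup]
            exact ciSup_le fun r => by linarith [hpair q r]
          linarith
        have h3 : A ≤ B - A := by
          rw [hAsup]
          exact ciSup_le h1
        linarith
      linarith [hBle, h2AB]
  · -- (M.1) for Mprime
    intro p hp
    rcases Nat.even_or_odd p with ⟨k, hk⟩ | ⟨k, hk⟩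
    · -- p = 2k, k ≥ 1
      have hk1 : 1 ≤ k := by omega
      rw [hMeq p, hMeq (p - 1), hMeq (p + 1)]
      have e1 : p / 2 = k := by omega
      have e2 : p - p / 2 = k := by omega
      have e3 : (p - 1) / 2 = k - 1 := by omega
      have e4 : (p - 1) - (p - 1) / 2 = k := by omega
      have e5 : (p + 1) / 2 = k := by omega
      have e6 : (p + 1) - (p + 1) / 2 = k + 1 := by omega
      rw [e2, e1, e4, e3, e6, e5]
      have h1 := hM1 k hk1
      nlinarith [hpos k, hpos (k - 1), hpos (k + 1), h1]
    · -- p = 2k + 1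
      rw [hMeq p, hMeq (p - 1), hMeq (p + 1)]
      have e1 : p / 2 = k := by omega
      have e2 : p - p / 2 = k + 1 := by omega
      have e3 : (p - 1) / 2 = k := by omega
      have e4 : (p - 1) - (p - 1) / 2 = k := by omega
      have e5 : (p + 1) / 2 = k + 1 := by omega
      have e6 : (p + 1) - (p + 1) / 2 = k + 1 := by omega
      rw [e2, e1, e4, e3, e6, e5]
      ring_nf
      exact le_refl _
  · -- (M.3)' for Mprime
    have heq : (fun p : ℕ => Mprime M p / Mprime M (p + 1)) =
        fun p : ℕ => M (p / 2) / M (p / 2 + 1) := by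
      funext p
      rcases Nat.even_or_odd p with ⟨k, hk⟩ | ⟨k, hk⟩
      · have e1 : p / 2 = k := by omega
        have e2 : p - p / 2 = k := by omega
        have e3 : (p + 1) / 2 = k := by omega
        have e4 : (p + 1) - (p + 1) / 2 = k + 1 := by omega
        rw [hMeq p, hMeq (p + 1), e2, e1, e4, e3]
        rw [mul_div_mul_left _ _ (hpos k).ne']
      · have e1 : p / 2 = k := by omega
        have e2 : p - p / 2 = k + 1 := by omega
        have e3 : (p + 1) / 2 = k + 1 := by omega
        have e4 : (p + 1) - (p + 1) / 2 = k + 1 := by omega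
        rw [hMeq p, hMeq (p + 1), e2, e1, e4, e3]
        rw [mul_div_mul_right _ _ (hpos (k + 1)).ne']
    rw [heq]
    apply Summable.even_add_odd
    · have : (fun k : ℕ => M ((2 * k) / 2) / M ((2 * k) / 2 + 1)) =
          fun k : ℕ => M k / M (k + 1) := by
        funext k
        have : (2 * k) / 2 = k := by omega
        rw [this]
      rw [this]
      exact hM3'
    · have : (fun k : ℕ => M ((2 * k + 1) / 2) / M ((2 * k + 1) / 2 + 1)) =
          fun k : ℕ => M k / M (k + 1) := by
        funext k
        have : (2 * k + 1) / 2 = k := by omega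
        rw [this]
      rw [this]
      exact hM3'
end

section
/- Let M_p satisfy (M.1), (M.2), (M.3)'. Suppose f is a compactly supported ultradistribution of class (M_p) on an open Ω ⊆ ℝ^d, φ_ε is an (N_p)-net of mollifiers with 𝓕φ supported in {|ξ| ≤ 2}, and assume the Beurling-case estimates: (∃ k, h, C', ε_0 > 0)(∀ l > 0 ∃ C'_l) such that for all ε < ε_0 and all ξ ∈ ℝ^d, |𝓕f(ξ)| ≤ C' (e^{M(|ξ|/h) − M(c/(hε))} + e^{M(k/ε) − M(|ξ|/l)}) with c > 0 a fixed constant, where the first term's constant is uniform and the second holds for every l. Then for every λ > 0, sup_ξ |𝓕f(ξ)| e^{M(|ξ|/λ)} < ∞. -/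
open Real Set

open Filter

lemma massoc_bdd (M : ℕ → ℝ) (hpos : ∀ p, 0 < M p)
    (hM3' : Summable (fun p : ℕ => M p / M (p + 1))) (t : ℝ) (ht : 0 ≤ t) :
    BddAbove (Set.range fun p : ℕ => Real.log (t ^ p / M p)) := by
  set t' : ℝ := t + 1 with ht'
  have ht'pos : 0 < t' := by positivity
  have htend := hM3'.tendsto_atTop_zero
  have hev : ∀ᶠ p in atTop, M p / M (p + 1) < 1 / t' :=
    htend.eventually_lt_const (by positivity)
  obtain ⟨N, hN⟩ := eventually_atTop.1 hev
  -- ratios bounded beyond N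
  have step : ∀ p, N ≤ p → t' ^ p / M p ≤ t' ^ N / M N := by
    intro p hp
    induction p, hp using Nat.le_induction with
    | base => exact le_refl _
    | succ p hp ih =>
      have h1 : M p / M (p + 1) < 1 / t' := hN p hp
      have h2 : t' * M p < M (p + 1) := by
        have := (div_lt_div_iff₀ (hpos (p+1)) ht'pos).1 h1
        nlinarith [hpos p, hpos (p+1)]
      have hMp : 0 < M p := hpos p
      calc t' ^ (p+1) / M (p+1) ≤ t' ^ (p+1) / (t' * M p) := by
            gcongr
        _ = t' ^ p / M p := by
            rw [pow_succ, mul_comm t' (M p), mul_div_mul_right _ _ (ne_of_gt ht'pos)]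
        _ ≤ t' ^ N / M N := ih
  set B : ℝ := max 0 (Real.log (t' ^ N / M N)) with hB
  have key : ∀ p, N ≤ p → Real.log (t ^ p / M p) ≤ B := by
    intro p hp
    rcases eq_or_lt_of_le (div_nonneg (pow_nonneg ht p) (hpos p).le) with h0 | h0
    · rw [← h0, Real.log_zero]; exact le_max_left _ _
    · refine le_trans (Real.log_le_log h0 ?_) (le_max_right _ _)
      calc t ^ p / M p ≤ t' ^ p / M p := by
            gcongr
            · exact (hpos p).le
            · linarith
        _ ≤ t' ^ N / M N := step p hp
  have hsub : (Set.range fun p : ℕ => Real.log (t ^ p / M p)) ⊆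
      ((fun p : ℕ => Real.log (t ^ p / M p)) '' (Set.Iic N)) ∪ Set.Iic B := by
    rintro x ⟨p, rfl⟩
    by_cases hp : p ≤ N
    · exact Or.inl ⟨p, hp, rfl⟩
    · exact Or.inr (key p (le_of_not_ge hp))
  exact BddAbove.mono hsub
    ((((Set.finite_Iic N).image _).bddAbove).union bddAbove_Iic)

lemma le_massoc (M : ℕ → ℝ) (hpos : ∀ p, 0 < M p)
    (hM3' : Summable (fun p : ℕ => M p / M (p + 1))) {t : ℝ} (ht : 0 ≤ t) (p : ℕ) :
    Real.log (t ^ p / M p) ≤ Massoc M t :=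
  le_ciSup (massoc_bdd M hpos hM3' t ht) p

lemma massoc_nonneg (M : ℕ → ℝ) (hpos : ∀ p, 0 < M p) (hM0 : M 0 = 1)
    (hM3' : Summable (fun p : ℕ => M p / M (p + 1))) {t : ℝ} (ht : 0 ≤ t) :
    0 ≤ Massoc M t := by
  have := le_massoc M hpos hM3' ht 0
  simpa [hM0] using this

lemma massoc_mono (M : ℕ → ℝ) (hpos : ∀ p, 0 < M p) (hM0 : M 0 = 1)
    (hM3' : Summable (fun p : ℕ => M p / M (p + 1))) {s t : ℝ} (hs : 0 ≤ s) (hst : s ≤ t) :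
    Massoc M s ≤ Massoc M t := by
  have ht : 0 ≤ t := hs.trans hst
  refine ciSup_le fun p => ?_
  rcases eq_or_lt_of_le (div_nonneg (pow_nonneg hs p) (hpos p).le) with h0 | h0
  · rw [← h0, Real.log_zero]; exact massoc_nonneg M hpos hM0 hM3' ht
  · refine le_trans (Real.log_le_log h0 ?_) (le_massoc M hpos hM3' ht p)
    have hMp : 0 < M p := hpos p
    gcongr

lemma massoc_zero (M : ℕ → ℝ) (hpos : ∀ p, 0 < M p) (hM0 : M 0 = 1)
    (hM3' : Summable (fun p : ℕ => M p / M (p + 1))) : Massoc M 0 = 0 := by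
  refine le_antisymm (ciSup_le fun p => ?_) (massoc_nonneg M hpos hM0 hM3' le_rfl)
  cases p with
  | zero => simp [hM0]
  | succ n => simp [zero_pow (Nat.succ_ne_zero n)]

lemma massoc_two_mul (M : ℕ → ℝ) (hpos : ∀ p, 0 < M p) (hM0 : M 0 = 1)
    (A H : ℝ) (hA : 1 ≤ A) (hH : 1 ≤ H)
    (hM2 : ∀ p q : ℕ, M (p + q) ≤ A * H ^ (p + q) * M p * M q)
    (hM3' : Summable (fun p : ℕ => M p / M (p + 1))) {t : ℝ} (ht : 0 ≤ t) :
    2 * Massoc M t ≤ Massoc M (H * t) + Real.log A := by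
  have hlogA : 0 ≤ Real.log A := Real.log_nonneg hA
  rcases eq_or_lt_of_le ht with h0 | h0
  · rw [← h0, massoc_zero M hpos hM0 hM3']
    have : 0 ≤ Massoc M (H * 0) := massoc_nonneg M hpos hM0 hM3' (by simp)
    linarith
  · have hHt : 0 < H * t := mul_pos (by linarith) h0
    have key : Massoc M t ≤ (Massoc M (H * t) + Real.log A) / 2 := by
      refine ciSup_le fun p => ?_
      rw [le_div_iff₀ (by norm_num)]
      have hMp := hpos p
      have hM2p := hpos (2 * p)
      have ht2p : 0 < t ^ (2 * p) := pow_pos h0 _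
      have h2 : M (2 * p) ≤ A * H ^ (2 * p) * M p * M p := by
        have := hM2 p p
        rwa [← two_mul] at this
      have h1 : t ^ (2 * p) / M p ^ 2 ≤ A * ((H * t) ^ (2 * p) / M (2 * p)) := by
        rw [mul_div_assoc', div_le_div_iff₀ (by positivity) hM2p]
        calc t ^ (2 * p) * M (2 * p) ≤ t ^ (2 * p) * (A * H ^ (2 * p) * M p * M p) :=
              mul_le_mul_of_nonneg_left h2 ht2p.le
          _ = A * (H * t) ^ (2 * p) * M p ^ 2 := by rw [mul_pow]; ring
      have e1 : t ^ (2 * p) / M p ^ 2 = (t ^ p / M p) ^ 2 := by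
        rw [div_pow, ← pow_mul, mul_comm]
      calc Real.log (t ^ p / M p) * 2 = Real.log ((t ^ p / M p) ^ 2) := by
            rw [Real.log_pow]; push_cast; ring
        _ = Real.log (t ^ (2 * p) / M p ^ 2) := by rw [e1]
        _ ≤ Real.log (A * ((H * t) ^ (2 * p) / M (2 * p))) :=
            Real.log_le_log (by positivity) h1
        _ = Real.log A + Real.log ((H * t) ^ (2 * p) / M (2 * p)) :=
            Real.log_mul (by linarith) (by positivity)
        _ ≤ Real.log A + Massoc M (H * t) := by
            have := le_massoc M hpos hM3' hHt.le (2 * p)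
            linarith
        _ = Massoc M (H * t) + Real.log A := by ring
    linarith

/-- Optimization step in the regularity theorem (Beurling case): if the Fourier
transform `F = 𝓕f` of a compactly supported `(M_p)`-ultradistribution satisfies
`|F(ξ)| ≤ C' (e^{M(|ξ|/h) − M(c/(hε))} + e^{M(k/ε) − M(|ξ|/l)})` for all small `ε`
and all `ξ`, uniformly in the first term and for every `l > 0` in the second, then
`sup_ξ |F(ξ)| e^{M(|ξ|/λ)} < ∞` for every `λ > 0`. -/
theorem beurling_regularity_optimization (M : ℕ → ℝ) (hpos : ∀ p, 0 < M p)
    (hM0 : M 0 = 1)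
    (hM1 : ∀ p : ℕ, 1 ≤ p → M p ^ 2 ≤ M (p - 1) * M (p + 1))
    (A H : ℝ) (hA : 1 ≤ A) (hH : 1 ≤ H)
    (hM2 : ∀ p q : ℕ, M (p + q) ≤ A * H ^ (p + q) * M p * M q)
    (hM3' : Summable (fun p : ℕ => M p / M (p + 1)))
    {d : ℕ} (F : EuclideanSpace ℝ (Fin d) → ℂ)
    (k h c ε₀ : ℝ) (hk : 0 < k) (hh : 0 < h) (hc : 0 < c) (hε₀ : 0 < ε₀)
    (hbound : ∀ l > (0 : ℝ), ∃ C' > (0 : ℝ), ∀ ε ∈ Set.Ioo (0 : ℝ) ε₀,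
      ∀ ξ : EuclideanSpace ℝ (Fin d),
        ‖F ξ‖ ≤ C' * (Real.exp (Massoc M (‖ξ‖ / h) - Massoc M (c / (h * ε))) +
          Real.exp (Massoc M (k / ε) - Massoc M (‖ξ‖ / l)))) :
    ∀ lam > (0 : ℝ), ∃ C : ℝ, ∀ ξ : EuclideanSpace ℝ (Fin d),
      ‖F ξ‖ * Real.exp (Massoc M (‖ξ‖ / lam)) ≤ C := by
  intro lam hlam
  have hH0 : 0 < H := lt_of_lt_of_le one_pos hH
  have hA0 : 0 < A := lt_of_lt_of_le one_pos hA
  set m : ℝ := min 1 (lam / h) with hm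
  have hm0 : 0 < m := lt_min one_pos (div_pos hlam hh)
  have hm1 : m ≤ 1 := min_le_left _ _
  have hml : h * m ≤ lam := by
    have h1 : m ≤ lam / h := min_le_right _ _
    calc h * m ≤ h * (lam / h) := by nlinarith
      _ = lam := by field_simp
  set l : ℝ := min (lam / H) (c * m / (k * H ^ 2)) with hl
  have hl0 : 0 < l := lt_min (div_pos hlam hH0) (by positivity)
  obtain ⟨C', hC', hC'b⟩ := hbound l hl0
  set R : ℝ := c * m / (ε₀ * H) + 1 with hR
  have hR0 : 0 < R := by positivity
  refine ⟨max (2 * A * C')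
    (C' * (Real.exp (Massoc M (R / h)) + Real.exp (Massoc M (2 * k / ε₀))) *
      Real.exp (Massoc M (R / lam))), fun ξ => ?_⟩
  set x : ℝ := ‖ξ‖ with hx
  have hx0 : 0 ≤ x := norm_nonneg _
  by_cases hxR : x ≤ R
  · -- small frequencies: use ε = ε₀ / 2
    have hε : ε₀ / 2 ∈ Set.Ioo (0 : ℝ) ε₀ := ⟨by linarith, by linarith⟩
    have hb := hC'b (ε₀ / 2) hε ξ
    have E1 : Real.exp (Massoc M (x / h) - Massoc M (c / (h * (ε₀ / 2)))) ≤
        Real.exp (Massoc M (R / h)) := by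
      apply Real.exp_le_exp.2
      have n1 : 0 ≤ Massoc M (c / (h * (ε₀ / 2))) :=
        massoc_nonneg M hpos hM0 hM3' (by positivity)
      have n2 : Massoc M (x / h) ≤ Massoc M (R / h) :=
        massoc_mono M hpos hM0 hM3' (by positivity) (by gcongr)
      linarith
    have E2 : Real.exp (Massoc M (k / (ε₀ / 2)) - Massoc M (x / l)) ≤
        Real.exp (Massoc M (2 * k / ε₀)) := by
      apply Real.exp_le_exp.2
      have n1 : 0 ≤ Massoc M (x / l) := massoc_nonneg M hpos hM0 hM3' (by positivity)
      have e : k / (ε₀ / 2) = 2 * k / ε₀ := by field_simp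
      rw [e]
      linarith
    have hb2 : ‖F ξ‖ ≤ C' * (Real.exp (Massoc M (R / h)) + Real.exp (Massoc M (2 * k / ε₀))) := by
      calc ‖F ξ‖ ≤ _ := hb
        _ ≤ _ := by gcongr
    have E3 : Real.exp (Massoc M (x / lam)) ≤ Real.exp (Massoc M (R / lam)) := by
      apply Real.exp_le_exp.2
      exact massoc_mono M hpos hM0 hM3' (by positivity) (by gcongr)
    refine le_trans ?_ (le_max_right _ _)
    have hF0 : 0 ≤ ‖F ξ‖ := norm_nonneg _
    calc ‖F ξ‖ * Real.exp (Massoc M (x / lam))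
        ≤ (C' * (Real.exp (Massoc M (R / h)) + Real.exp (Massoc M (2 * k / ε₀)))) *
          Real.exp (Massoc M (R / lam)) := by
          apply mul_le_mul hb2 E3 (Real.exp_pos _).le
          positivity
      _ = _ := rfl
  · -- large frequencies
    push_neg at hxR
    have hx1 : 0 < x := lt_trans hR0 hxR
    set ε : ℝ := c * m / (x * H) with hε
    have hε0 : 0 < ε := by positivity
    have hεI : ε ∈ Set.Ioo (0 : ℝ) ε₀ := by
      refine ⟨hε0, ?_⟩
      rw [hε, div_lt_iff₀ (by positivity)]
      have h1 : c * m / (ε₀ * H) < x :=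
        lt_of_lt_of_le (by rw [hR] at hxR; linarith) le_rfl
      rw [div_lt_iff₀ (by positivity)] at h1
      nlinarith
    have hb := hC'b ε hεI ξ
    have e1 : c / (h * ε) = H * (x / (h * m)) := by
      rw [hε]
      field_simp
    have e2 : k / ε = k * x * H / (c * m) := by
      rw [hε]
      field_simp
    -- first term
    have key1 := massoc_two_mul M hpos hM0 A H hA hH hM2 hM3'
      (t := x / (h * m)) (by positivity)
    have m1 : Massoc M (x / h) ≤ Massoc M (x / (h * m)) :=
      massoc_mono M hpos hM0 hM3' (by positivity) (by gcongr; nlinarith)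
    have m2 : Massoc M (x / lam) ≤ Massoc M (x / (h * m)) :=
      massoc_mono M hpos hM0 hM3' (by positivity) (by gcongr)
    have t1 : Massoc M (x / h) - Massoc M (c / (h * ε)) ≤
        Real.log A - Massoc M (x / lam) := by
      rw [e1]; linarith
    -- second term
    set s : ℝ := max (k / ε) (x / lam) with hs
    have hs0 : 0 ≤ s := le_trans (by positivity) (le_max_left _ _)
    have key2 := massoc_two_mul M hpos hM0 A H hA hH hM2 hM3' (t := s) hs0
    have m3 : Massoc M (k / ε) ≤ Massoc M s :=
      massoc_mono M hpos hM0 hM3' (by positivity) (le_max_left _ _)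
    have m4 : Massoc M (x / lam) ≤ Massoc M s :=
      massoc_mono M hpos hM0 hM3' (by positivity) (le_max_right _ _)
    have h5a : k / ε ≤ x / (H * l) := by
      have hll : l ≤ c * m / (k * H ^ 2) := min_le_right _ _
      have hHl : H * l ≤ c * m / (k * H) := by
        have e6 : H * (c * m / (k * H ^ 2)) = c * m / (k * H) := by
          field_simp
        calc H * l ≤ H * (c * m / (k * H ^ 2)) := mul_le_mul_of_nonneg_left hll hH0.le
          _ = c * m / (k * H) := e6
      have h7 : x / (c * m / (k * H)) ≤ x / (H * l) :=
        div_le_div_of_nonneg_left hx0 (mul_pos hH0 hl0) hHl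
      have h8 : x / (c * m / (k * H)) = k * x * H / (c * m) := by
        field_simp
      rw [e2]
      linarith
    have h5b : x / lam ≤ x / (H * l) := by
      have hll : l ≤ lam / H := min_le_left _ _
      have hHl : H * l ≤ lam := by
        calc H * l ≤ H * (lam / H) := mul_le_mul_of_nonneg_left hll hH0.le
          _ = lam := by field_simp
      exact div_le_div_of_nonneg_left hx0 (mul_pos hH0 hl0) hHl
    have m5 : Massoc M (H * s) ≤ Massoc M (x / l) := by
      apply massoc_mono M hpos hM0 hM3' (by positivity)
      have hsle : s ≤ x / (H * l) := max_le h5a h5b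
      calc H * s ≤ H * (x / (H * l)) := mul_le_mul_of_nonneg_left hsle hH0.le
        _ = x / l := by field_simp
    have t2 : Massoc M (k / ε) - Massoc M (x / l) ≤
        Real.log A - Massoc M (x / lam) := by linarith
    -- combine
    set y : ℝ := Massoc M (x / lam) with hy
    have E1 : Real.exp (Massoc M (x / h) - Massoc M (c / (h * ε))) ≤
        A * Real.exp (-y) := by
      rw [← Real.exp_log hA0, ← Real.exp_add]
      exact Real.exp_le_exp.2 (by linarith)
    have E2 : Real.exp (Massoc M (k / ε) - Massoc M (x / l)) ≤
        A * Real.exp (-y) := by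
      rw [← Real.exp_log hA0, ← Real.exp_add]
      exact Real.exp_le_exp.2 (by linarith)
    have hb2 : ‖F ξ‖ ≤ 2 * A * C' * Real.exp (-y) := by
      calc ‖F ξ‖ ≤ _ := hb
        _ ≤ C' * (A * Real.exp (-y) + A * Real.exp (-y)) := by
            gcongr
        _ = 2 * A * C' * Real.exp (-y) := by ring
    refine le_trans ?_ (le_max_left _ _)
    calc ‖F ξ‖ * Real.exp y ≤ 2 * A * C' * Real.exp (-y) * Real.exp y :=
          mul_le_mul_of_nonneg_right hb2 (Real.exp_pos _).le
      _ = 2 * A * C' * (Real.exp (-y) * Real.exp y) := by ring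
      _ = 2 * A * C' := by rw [← Real.exp_add, neg_add_cancel, Real.exp_zero, mul_one]
end
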